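/- arXiv:math/0301179 — 10 statements merged into one kernel-verified Lean document; each statement's English description precedes it below -/
import Mathlib

section
/- Let n > 2 be an integer, r a prime, and α ≥ 1 with r^α exactly dividing n-1 (i.e., r^α ∣ n-1 but r^(α+1) ∤ n-1). Suppose there exists an integer 1 < a < n with a^(r^α) ≡ 1 (mod n) and gcd(a^(r^(α-1)) - 1, n) = 1. Then there exists a prime factor p of n such that r^α exactly divides p-1 and a mod p is not an r-th power in 𝔽_p. -/
theorem exists_prime_factor_not_rth_power (n r α a : ℕ) (hn : 2 < n)
    (hr : r.Prime) (hα : 1 ≤ α)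
    (hdvd : r ^ α ∣ n - 1) (hndvd : ¬ r ^ (α + 1) ∣ n - 1)
    (ha1 : 1 < a) (han : a < n)
    (hord : a ^ (r ^ α) ≡ 1 [MOD n])
    (hgcd : Nat.gcd (a ^ (r ^ (α - 1)) - 1) n = 1) :
    ∃ p : ℕ, p.Prime ∧ p ∣ n ∧ r ^ α ∣ p - 1 ∧ ¬ r ^ (α + 1) ∣ p - 1 ∧
      ¬ ∃ b : ZMod p, b ^ r = (a : ZMod p) := by
  have hn0 : n ≠ 0 := by omega
  -- the order of a mod every prime factor is exactly r^α
  have key : ∀ p : ℕ, p.Prime → p ∣ n →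
      (a : ZMod p) ^ (r ^ α) = 1 ∧ orderOf ((a : ZMod p)) = r ^ α ∧ r ^ α ∣ p - 1 := by
    intro p hp hpn
    haveI : Fact p.Prime := ⟨hp⟩
    have hmodp : a ^ (r ^ α) ≡ 1 [MOD p] := hord.of_dvd hpn
    have hpow : (a : ZMod p) ^ (r ^ α) = 1 := by
      have := (ZMod.natCast_eq_natCast_iff _ _ _).mpr hmodp
      push_cast at this
      exact this
    have hne : (a : ZMod p) ≠ 0 := by
      intro h0
      rw [h0, zero_pow (pow_ne_zero α hr.ne_zero)] at hpow
      exact zero_ne_one hpow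
    have hodvd : orderOf ((a : ZMod p)) ∣ r ^ α := orderOf_dvd_of_pow_eq_one hpow
    obtain ⟨i, hi, hieq⟩ := (Nat.dvd_prime_pow hr).mp hodvd
    have hiα : i = α := by
      by_contra hne'
      have hilt : i ≤ α - 1 := by omega
      have h1 : (a : ZMod p) ^ (r ^ (α - 1)) = 1 := by
        have : orderOf ((a : ZMod p)) ∣ r ^ (α - 1) := by
          rw [hieq]; exact pow_dvd_pow r hilt
        exact orderOf_dvd_iff_pow_eq_one.mp this
      have hcast : ((a ^ (r ^ (α - 1)) : ℕ) : ZMod p) = ((1 : ℕ) : ZMod p) := by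
        push_cast; simpa using h1
      have hmeq : a ^ (r ^ (α - 1)) ≡ 1 [MOD p] :=
        (ZMod.natCast_eq_natCast_iff _ _ _).mp hcast
      have hpd : p ∣ a ^ (r ^ (α - 1)) - 1 :=
        (Nat.modEq_iff_dvd' (Nat.one_le_pow _ _ (by omega))).mp hmeq.symm
      have : p ∣ 1 := hgcd ▸ Nat.dvd_gcd hpd hpn
      exact hp.one_lt.ne' (Nat.dvd_one.mp this)
    have hord' : orderOf ((a : ZMod p)) = r ^ α := by rw [hieq, hiα]
    exact ⟨hpow, hord', hord' ▸ ZMod.orderOf_dvd_card_sub_one hne⟩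
  -- find a prime factor p with ¬ r^(α+1) ∣ p - 1
  obtain ⟨p, hp, hpn, hpnd⟩ : ∃ p : ℕ, p.Prime ∧ p ∣ n ∧ ¬ r ^ (α + 1) ∣ p - 1 := by
    by_contra hcon
    push_neg at hcon
    apply hndvd
    have hmod : ∀ p ∈ n.primeFactorsList, (p : ZMod (r ^ (α + 1))) = 1 := by
      intro p hpmem
      have hp := Nat.prime_of_mem_primeFactorsList hpmem
      have hpd := hcon p hp (Nat.dvd_of_mem_primeFactorsList hpmem)
      have : p ≡ 1 [MOD r ^ (α + 1)] :=
        ((Nat.modEq_iff_dvd' hp.one_le).mpr hpd).symm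
      have := (ZMod.natCast_eq_natCast_iff _ _ _).mpr this
      simpa using this
    have hone : ((n : ℕ) : ZMod (r ^ (α + 1))) = 1 := by
      conv_lhs => rw [← Nat.prod_primeFactorsList hn0]
      push_cast
      refine List.prod_eq_one ?_
      intro x hx
      obtain ⟨q, hq, rfl⟩ := List.mem_map.mp hx
      exact hmod q hq
    have hmeq : n ≡ 1 [MOD r ^ (α + 1)] :=
      (ZMod.natCast_eq_natCast_iff n 1 (r ^ (α + 1))).mp (by simpa using hone)
    exact (Nat.modEq_iff_dvd' (by omega)).mp hmeq.symm
  obtain ⟨hpow, horda, hdvd'⟩ := key p hp hpn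
  refine ⟨p, hp, hpn, hdvd', hpnd, ?_⟩
  rintro ⟨b, hb⟩
  haveI : Fact p.Prime := ⟨hp⟩
  have hbpow : b ^ (r ^ (α + 1)) = 1 := by
    rw [show r ^ (α + 1) = r * r ^ α by ring, pow_mul, hb, hpow]
  have hb0 : b ≠ 0 := by
    intro h0
    rw [h0, zero_pow (pow_ne_zero _ hr.ne_zero)] at hbpow
    exact zero_ne_one hbpow
  have hobdvd : orderOf b ∣ r ^ (α + 1) := orderOf_dvd_of_pow_eq_one hbpow
  obtain ⟨j, hj, hjeq⟩ := (Nat.dvd_prime_pow hr).mp hobdvd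
  have hadvdb : r ^ α ∣ orderOf b := by
    rw [← horda, ← hb]; exact orderOf_pow_dvd r
  have hjα : α ≤ j := by
    rw [hjeq] at hadvdb
    exact (Nat.pow_dvd_pow_iff_le_right hr.one_lt).mp hadvdb
  rcases (show j = α ∨ j = α + 1 by omega) with hjc | hjc <;> rw [hjc] at hjeq
  · -- j = α : orderOf (b^r) = r^(α-1), contradiction
    have : orderOf (b ^ r) = r ^ α / Nat.gcd (r ^ α) r := by
      rw [orderOf_pow' b hr.ne_zero, hjeq]
    rw [hb, horda] at this
    have hgr : Nat.gcd (r ^ α) r = r :=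
      Nat.gcd_eq_right (dvd_pow_self r (by omega))
    rw [hgr] at this
    have hdiv : r ^ α / r = r ^ (α - 1) := by
      conv_lhs => rw [show α = (α - 1) + 1 by omega]
      rw [pow_succ, Nat.mul_div_cancel _ hr.pos]
    rw [hdiv] at this
    have := Nat.pow_right_injective hr.two_le this
    omega
  · -- j = α + 1 : r^(α+1) ∣ p - 1, contradiction
    exact hpnd (hjeq ▸ ZMod.orderOf_dvd_card_sub_one hb0)
end

section
/- Let n > 2, r prime, r^α || n-1 with α ≥ 1, and suppose there is 1 < a < n with a^(r^α) ≡ 1 (mod n) and gcd(a^(r^(α-1)) - 1, n) = 1. Then every prime factor q of n satisfies r^α ∣ q - 1. -/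
theorem every_prime_factor_cong_one (n r α a : ℕ) (hn : 2 < n)
    (hr : r.Prime) (hα : 1 ≤ α)
    (hdvd : r ^ α ∣ n - 1) (hndvd : ¬ r ^ (α + 1) ∣ n - 1)
    (ha1 : 1 < a) (han : a < n)
    (hord : a ^ (r ^ α) ≡ 1 [MOD n])
    (hgcd : Nat.gcd (a ^ (r ^ (α - 1)) - 1) n = 1) :
    ∀ q : ℕ, q.Prime → q ∣ n → r ^ α ∣ q - 1 := by
  intro q hq hqn
  haveI : Fact q.Prime := ⟨hq⟩
  set b : ZMod q := (a : ZMod q) with hb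
  -- a^(r^α) ≡ 1 mod q
  have hmodq : a ^ (r ^ α) ≡ 1 [MOD q] := hord.of_dvd hqn
  have hb1 : b ^ (r ^ α) = 1 := by
    calc b ^ (r ^ α) = ((a ^ (r ^ α) : ℕ) : ZMod q) := by push_cast; ring
      _ = ((1 : ℕ) : ZMod q) := by exact_mod_cast (ZMod.natCast_eq_natCast_iff _ _ _).2 hmodq
      _ = 1 := by norm_num
  have hordvd : orderOf b ∣ r ^ α := orderOf_dvd_of_pow_eq_one hb1
  -- q does not divide a^(r^(α-1)) - 1
  have hne : b ^ (r ^ (α - 1)) ≠ 1 := by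
    intro h
    have hge : 1 ≤ a ^ (r ^ (α - 1)) := Nat.one_le_pow _ _ (by omega)
    have : ((a ^ (r ^ (α - 1)) : ℕ) : ZMod q) = ((1 : ℕ) : ZMod q) := by
      push_cast; rw [← h]
    have hmod : a ^ (r ^ (α - 1)) ≡ 1 [MOD q] := (ZMod.natCast_eq_natCast_iff _ _ _).1 this
    have hdq : q ∣ a ^ (r ^ (α - 1)) - 1 := (Nat.modEq_iff_dvd' hge).1 hmod.symm
    have : q ∣ Nat.gcd (a ^ (r ^ (α - 1)) - 1) n := Nat.dvd_gcd hdq hqn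
    rw [hgcd] at this
    have h1 := Nat.le_of_dvd one_pos this
    have h2 := hq.two_le
    omega
  -- order is exactly r^α
  have hordeq : orderOf b = r ^ α := by
    obtain ⟨β, hβle, hβ⟩ := (Nat.dvd_prime_pow hr).1 hordvd
    rcases Nat.lt_or_ge β α with hlt | hge
    · exfalso
      apply hne
      apply orderOf_dvd_iff_pow_eq_one.1
      rw [hβ]
      exact pow_dvd_pow r (by omega)
    · rw [hβ]; congr 1; omega
  -- b ≠ 0
  have hb0 : b ≠ 0 := by
    intro h
    rw [h, zero_pow (pow_ne_zero α hr.pos.ne')] at hb1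
    exact zero_ne_one hb1
  have := ZMod.orderOf_dvd_card_sub_one hb0
  rw [hordeq] at this
  exact this
end

section
/- Let p be a prime, r a prime with r ∣ p-1, a ∈ 𝔽_p not an r-th power, and let θ be a root of the irreducible polynomial x^r - a in the extension field 𝔽_p(θ). For a positive integer m, the map σ_m sending f(θ) to f(θ^m) (for f a polynomial of degree < r over 𝔽_p) is a field automorphism of 𝔽_p(θ) over 𝔽_p if and only if a^m = a in 𝔽_p. -/
open Polynomial

theorem sigma_m_automorphism_iff (p r : ℕ) [Fact p.Prime] (hr : r.Prime)
    (hrp : r ∣ p - 1) (a : ZMod p) (ha : ¬ ∃ b : ZMod p, b ^ r = a)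
    (m : ℕ) (hm : 0 < m) :
    (∃ σ : AdjoinRoot (X ^ r - C a) ≃ₐ[ZMod p] AdjoinRoot (X ^ r - C a),
        σ (AdjoinRoot.root (X ^ r - C a)) = (AdjoinRoot.root (X ^ r - C a)) ^ m)
      ↔ a ^ m = a := by
  have hirr : Irreducible (X ^ r - C a) :=
    X_pow_sub_C_irreducible_of_prime hr (fun b hb => ha ⟨b, hb⟩)
  have : Fact (Irreducible (X ^ r - C a)) := ⟨hirr⟩
  set f : (ZMod p)[X] := X ^ r - C a with hf
  have hf0 : f ≠ 0 := hirr.ne_zero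
  set θ := AdjoinRoot.root f with hθ
  have hroot : θ ^ r = algebraMap (ZMod p) (AdjoinRoot f) a := by
    have : AdjoinRoot.mk f (X ^ r - C a) = 0 := AdjoinRoot.mk_self (f := f)
    simpa [map_sub, map_pow, AdjoinRoot.mk_X, AdjoinRoot.mk_C, sub_eq_zero] using this
  have hinj : Function.Injective (algebraMap (ZMod p) (AdjoinRoot f)) :=
    (algebraMap (ZMod p) (AdjoinRoot f)).injective
  constructor
  · rintro ⟨σ, hσ⟩
    apply hinj
    have h1 : σ (θ ^ r) = θ ^ r := by
      rw [hroot, AlgEquiv.commutes]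
    have h2 : σ (θ ^ r) = (θ ^ m) ^ r := by
      rw [map_pow, hσ]
    rw [h1] at h2
    rw [map_pow, ← hroot, ← pow_mul, mul_comm, pow_mul, ← h2]
  · intro hma
    have haev : (Polynomial.aeval (θ ^ m)) f = 0 := by
      simp only [hf, map_sub, map_pow, aeval_X, aeval_C]
      rw [← pow_mul, mul_comm, pow_mul, hroot, ← map_pow, hma, sub_self]
    let φ : AdjoinRoot f →ₐ[ZMod p] AdjoinRoot f := AdjoinRoot.liftAlgHom f (Algebra.ofId _ _) (θ ^ m) haev
    have : FiniteDimensional (ZMod p) (AdjoinRoot f) :=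
      (AdjoinRoot.powerBasis hf0).finite
    have hinjφ : Function.Injective φ := φ.toRingHom.injective
    have hbij : Function.Bijective φ :=
      ⟨hinjφ, (LinearMap.injective_iff_surjective (f := φ.toLinearMap)).mp hinjφ⟩
    refine ⟨AlgEquiv.ofBijective φ hbij, ?_⟩
    exact AdjoinRoot.liftAlgHom_root f (Algebra.ofId _ _) (θ ^ m) haev
end

section
/- Let p be a prime, r a prime dividing p-1, a ∈ 𝔽_p not an r-th power, θ a root of x^r - a, n = p^l · d with gcd(p,d)=1 and a^n = a in 𝔽_p. Then for all i, j ≥ 0, G_n ⊆ G_{d^i p^j}, where G_m = { f(θ) ∈ 𝔽_p(θ)^* : f(θ^m) = f(θ)^m }. -/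
open Polynomial

/-- The set `G_m = { f(θ) ∈ 𝔽_p(θ)^* : f(θ^m) = f(θ)^m }` inside
`𝔽_p(θ) = 𝔽_p[x]/(x^r - a)`. -/
def Gset (p r : ℕ) (a : ZMod p) (m : ℕ) : Set (AdjoinRoot (X ^ r - C a)) :=
  {u | u ≠ 0 ∧ ∀ f : Polynomial (ZMod p),
    Polynomial.aeval (AdjoinRoot.root (X ^ r - C a)) f = u →
    Polynomial.aeval ((AdjoinRoot.root (X ^ r - C a)) ^ m) f = u ^ m}

section aux
variable (p r : ℕ) [Fact p.Prime] (a : ZMod p)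

lemma aux_root_pow :
    (AdjoinRoot.root (X ^ r - C a)) ^ r = algebraMap (ZMod p) _ a := by
  rw [AdjoinRoot.algebraMap_eq]
  have h0 : AdjoinRoot.mk (X ^ r - C a) (X ^ r - C a) = 0 := AdjoinRoot.mk_self
  rw [map_sub, map_pow, AdjoinRoot.mk_X, AdjoinRoot.mk_C, sub_eq_zero] at h0
  exact h0

noncomputable def auxPhi (m : ℕ) (ham : a ^ m = a) :
    AdjoinRoot (X ^ r - C a) →ₐ[ZMod p] AdjoinRoot (X ^ r - C a) :=
  AdjoinRoot.liftAlgHom _ (Algebra.ofId _ _) ((AdjoinRoot.root (X ^ r - C a)) ^ m) (by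
    show Polynomial.aeval ((AdjoinRoot.root (X ^ r - C a)) ^ m) (X ^ r - C a) = 0
    simp only [map_sub, map_pow, aeval_X, aeval_C]
    rw [← pow_mul, mul_comm m r, pow_mul, aux_root_pow, ← map_pow, ham, sub_self])

lemma auxPhi_root (m : ℕ) (ham : a ^ m = a) :
    auxPhi p r a m ham (AdjoinRoot.root (X ^ r - C a)) =
      (AdjoinRoot.root (X ^ r - C a)) ^ m :=
  AdjoinRoot.liftAlgHom_root (X ^ r - C a) _ ((AdjoinRoot.root (X ^ r - C a)) ^ m) _

lemma aux_aeval (m : ℕ) (ham : a ^ m = a) (f : Polynomial (ZMod p)) :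
    Polynomial.aeval ((AdjoinRoot.root (X ^ r - C a)) ^ m) f =
      auxPhi p r a m ham (Polynomial.aeval (AdjoinRoot.root (X ^ r - C a)) f) := by
  rw [← auxPhi_root p r a m ham, aeval_algHom_apply]

lemma aux_comp (m₁ m₂ : ℕ) (h₁ : a ^ m₁ = a) (h₂ : a ^ m₂ = a) (h₁₂ : a ^ (m₁ * m₂) = a)
    (v : AdjoinRoot (X ^ r - C a)) :
    auxPhi p r a (m₁ * m₂) h₁₂ v = auxPhi p r a m₂ h₂ (auxPhi p r a m₁ h₁ v) := by
  have : auxPhi p r a (m₁ * m₂) h₁₂ = (auxPhi p r a m₂ h₂).comp (auxPhi p r a m₁ h₁) := by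
    apply AdjoinRoot.algHom_ext
    simp [auxPhi_root, map_pow, ← pow_mul, mul_comm]
  rw [this]; rfl

lemma aux_congr (m m' : ℕ) (h : a ^ m = a) (h' : a ^ m' = a) (hmm : m = m')
    (v : AdjoinRoot (X ^ r - C a)) :
    auxPhi p r a m h v = auxPhi p r a m' h' v := by subst hmm; rfl

lemma aux_frob {S : Type*} [CommRing S] [Algebra (ZMod p) S] [CharP S p]
    (x : S) (f : Polynomial (ZMod p)) :
    Polynomial.aeval (x ^ p) f = (Polynomial.aeval x f) ^ p := by
  induction f using Polynomial.induction_on' with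
  | add f g hf hg => rw [map_add, map_add, hf, hg, add_pow_char]
  | monomial k c =>
      rw [aeval_monomial, aeval_monomial, mul_pow, ← map_pow, ZMod.pow_card,
        ← pow_mul, ← pow_mul, mul_comm k p]

lemma aux_frob_pow {S : Type*} [CommRing S] [Algebra (ZMod p) S] [CharP S p]
    (x : S) (f : Polynomial (ZMod p)) (j : ℕ) :
    Polynomial.aeval (x ^ p ^ j) f = (Polynomial.aeval x f) ^ p ^ j := by
  induction j with
  | zero => simp
  | succ j ih =>
      rw [pow_succ, pow_mul, aux_frob, ih, ← pow_mul, ← pow_succ]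

end aux

theorem Gn_subset_Gdipj (p r l d n : ℕ) [Fact p.Prime] (hr : r.Prime)
    (hrp : r ∣ p - 1) (a : ZMod p) (ha : ¬ ∃ b : ZMod p, b ^ r = a)
    (hn : n = p ^ l * d) (hcop : Nat.gcd p d = 1) (han : a ^ n = a) :
    ∀ i j : ℕ, Gset p r a n ⊆ Gset p r a (d ^ i * p ^ j) := by
  intro i j u hu
  obtain ⟨hu0, hG⟩ := hu
  push_neg at ha
  have hirr : Irreducible (X ^ r - C a) := X_pow_sub_C_irreducible_of_prime hr ha
  haveI : Fact (Irreducible (X ^ r - C a)) := ⟨hirr⟩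
  haveI : CharP (AdjoinRoot (X ^ r - C a)) p :=
    charP_of_injective_algebraMap (algebraMap (ZMod p) (AdjoinRoot (X ^ r - C a))).injective p
  -- exponent facts
  have hapl : a ^ p ^ l = a := ZMod.pow_card_pow a
  have had : a ^ d = a := by
    have : (a ^ p ^ l) ^ d = a := by rw [← pow_mul, ← hn, han]
    rwa [hapl] at this
  have hadi : ∀ i : ℕ, a ^ d ^ i = a := by
    intro i
    induction i with
    | zero => simp
    | succ i ih => rw [pow_succ, pow_mul, ih, had]
  have ham : ∀ i j : ℕ, a ^ (d ^ i * p ^ j) = a := by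
    intro i j; rw [pow_mul, hadi, ZMod.pow_card_pow]
  -- get φ_n u = u ^ n
  obtain ⟨f, hf⟩ := AdjoinRoot.mk_surjective u
  have hfu : Polynomial.aeval (AdjoinRoot.root (X ^ r - C a)) f = u := by
    rw [AdjoinRoot.aeval_eq, hf]
  have hphin : auxPhi p r a n han u = u ^ n := by
    have := hG f hfu
    rwa [aux_aeval p r a n han, hfu] at this
  -- φ_{p^l} v = v ^ p^l
  have hppow : ∀ (k : ℕ) (hk : a ^ p ^ k = a) (v : AdjoinRoot (X ^ r - C a)),
      auxPhi p r a (p ^ k) hk v = v ^ p ^ k := by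
    intro k hk v
    obtain ⟨g, hg⟩ := AdjoinRoot.mk_surjective v
    have hgv : Polynomial.aeval (AdjoinRoot.root (X ^ r - C a)) g = v := by
      rw [AdjoinRoot.aeval_eq, hg]
    rw [← hgv, ← aux_aeval, aux_frob_pow]
  -- φ_d u = u ^ d  (Frobenius injectivity)
  have hfrobinj : ∀ x y : AdjoinRoot (X ^ r - C a), x ^ p ^ l = y ^ p ^ l → x = y := by
    intro x y h
    have h2 : (x - y) ^ p ^ l = 0 := by rw [sub_pow_char_pow, h, sub_self]
    have h3 : x - y = 0 := pow_eq_zero_iff (pow_ne_zero l (Fact.out : p.Prime).ne_zero) |>.mp h2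
    exact sub_eq_zero.mp h3
  have hdp : a ^ (d * p ^ l) = a := by rw [mul_comm, ← hn]; exact han
  have hphid : auxPhi p r a d had u = u ^ d := by
    apply hfrobinj
    have key : auxPhi p r a (d * p ^ l) hdp u = u ^ (d * p ^ l) := by
      rw [aux_congr p r a (d * p ^ l) n hdp han (by rw [hn, mul_comm]) u, hphin, hn,
        mul_comm (p ^ l) d]
    rw [← hppow l hapl, ← aux_comp p r a d (p ^ l) had hapl hdp, key, pow_mul]
  have hphidi : ∀ i : ℕ, auxPhi p r a (d ^ i) (hadi i) u = u ^ d ^ i := by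
    intro i
    induction i with
    | zero =>
        rw [aux_congr p r a (d ^ 0) 1 (hadi 0) (pow_one a) (pow_zero d) u, ← hfu,
          ← aux_aeval p r a 1 (pow_one a) f, pow_one, pow_zero, pow_one]
    | succ i ih =>
        have h' : a ^ (d ^ i * d) = a := by rw [← pow_succ]; exact hadi (i + 1)
        rw [aux_congr p r a (d ^ (i + 1)) (d ^ i * d) (hadi (i + 1)) h' (pow_succ d i) u,
          aux_comp p r a (d ^ i) d (hadi i) had h', ih, map_pow, hphid, ← pow_mul, ← pow_succ']
  refine ⟨hu0, fun g hg => ?_⟩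
  rw [aux_aeval p r a (d ^ i * p ^ j) (ham i j), hg,
    aux_comp p r a (d ^ i) (p ^ j) (hadi i) (ZMod.pow_card_pow a) (ham i j),
    hphidi, hppow j (ZMod.pow_card_pow a), ← pow_mul]
end

section
/- With the setup 𝔽_p(θ) = 𝔽_p[x]/(x^r - a) (r prime, r ∣ p-1, a not an r-th power): if m₁, m₂ are positive integers with a^{m₁} = a^{m₂} = a in 𝔽_p and θ^{m₁} = θ^{m₂} (i.e., σ_{m₁} = σ_{m₂} as automorphisms), then the order of the subgroup G_{m₁} ∩ G_{m₂} divides m₁ - m₂. -/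
open Polynomial

theorem card_inter_dvd_sub (p r m₁ m₂ : ℕ) [Fact p.Prime] (hr : r.Prime)
    (hrp : r ∣ p - 1) (a : ZMod p) (ha : ¬ ∃ b : ZMod p, b ^ r = a)
    (hm₁ : 0 < m₁) (hm₂ : 0 < m₂) (ham₁ : a ^ m₁ = a) (ham₂ : a ^ m₂ = a)
    (hσ : (AdjoinRoot.root (X ^ r - C a)) ^ m₁ = (AdjoinRoot.root (X ^ r - C a)) ^ m₂) :
    (Nat.card ↥(Gset p r a m₁ ∩ Gset p r a m₂) : ℤ) ∣ (m₁ : ℤ) - (m₂ : ℤ) := by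
  set q : (ZMod p)[X] := X ^ r - C a with hq
  have hirr : Irreducible q := X_pow_sub_C_irreducible_of_prime hr
    (fun b hb => ha ⟨b, hb⟩)
  haveI : Fact (Irreducible q) := ⟨hirr⟩
  set K := AdjoinRoot q with hK
  haveI : Module.Finite (ZMod p) K :=
    Module.Finite.of_basis (AdjoinRoot.powerBasisAux'
      (monic_X_pow_sub_C a hr.pos.ne'))
  haveI : Finite K := Module.finite_of_finite (ZMod p)
  set θ : K := AdjoinRoot.root q with hθ
  have hroot : θ ^ r = algebraMap (ZMod p) K a := by
    have h0 : Polynomial.aeval θ q = 0 := by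
      rw [hθ, AdjoinRoot.aeval_eq, AdjoinRoot.mk_self]
    simp only [hq, map_sub, map_pow, aeval_X, aeval_C] at h0
    exact sub_eq_zero.mp h0
  -- the substitution maps are well-defined
  have haev : ∀ m : ℕ, a ^ m = a → Polynomial.aeval (θ ^ m) q = 0 := by
    intro m hm
    simp only [hq, map_sub, map_pow, aeval_X, aeval_C]
    rw [← pow_mul, mul_comm, pow_mul, hroot, ← map_pow, hm, sub_self]
  set σ₁ : K →ₐ[ZMod p] K := AdjoinRoot.liftAlgHom q (Algebra.ofId _ _) (θ ^ m₁) (by rw [Algebra.toRingHom_ofId, ← Polynomial.aeval_def]; exact haev m₁ ham₁) with hσ₁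
  set σ₂ : K →ₐ[ZMod p] K := AdjoinRoot.liftAlgHom q (Algebra.ofId _ _) (θ ^ m₂) (by rw [Algebra.toRingHom_ofId, ← Polynomial.aeval_def]; exact haev m₂ ham₂) with hσ₂
  have hσeq : σ₁ = σ₂ := by
    refine AdjoinRoot.algHom_ext ?_
    rw [hσ₁, hσ₂, AdjoinRoot.liftAlgHom_root, AdjoinRoot.liftAlgHom_root]
    exact hσ
  -- membership characterization
  have hmem₁ : ∀ u : K, u ∈ Gset p r a m₁ ↔ u ≠ 0 ∧ σ₁ u = u ^ m₁ := by
    intro u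
    constructor
    · rintro ⟨h0, h⟩
      refine ⟨h0, ?_⟩
      obtain ⟨g, rfl⟩ := AdjoinRoot.mk_surjective u
      rw [hσ₁, AdjoinRoot.liftAlgHom_mk]
      exact h g (AdjoinRoot.aeval_eq g)
    · rintro ⟨h0, h⟩
      refine ⟨h0, fun g hg => ?_⟩
      have : AdjoinRoot.mk q g = u := by rw [← AdjoinRoot.aeval_eq]; exact hg
      subst this
      show σ₁ (AdjoinRoot.mk q g) = _
      exact h
  have hmem₂ : ∀ u : K, u ∈ Gset p r a m₂ ↔ u ≠ 0 ∧ σ₂ u = u ^ m₂ := by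
    intro u
    constructor
    · rintro ⟨h0, h⟩
      refine ⟨h0, ?_⟩
      obtain ⟨g, rfl⟩ := AdjoinRoot.mk_surjective u
      rw [hσ₂, AdjoinRoot.liftAlgHom_mk]
      exact h g (AdjoinRoot.aeval_eq g)
    · rintro ⟨h0, h⟩
      refine ⟨h0, fun g hg => ?_⟩
      have : AdjoinRoot.mk q g = u := by rw [← AdjoinRoot.aeval_eq]; exact hg
      subst this
      show σ₂ (AdjoinRoot.mk q g) = _
      exact h
  -- the subgroup of units
  set H : Subgroup Kˣ :=
    { carrier := {x : Kˣ | σ₁ (x : K) = (x : K) ^ m₁ ∧ σ₂ (x : K) = (x : K) ^ m₂}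
      one_mem' := by simp
      mul_mem' := by
        rintro x y ⟨hx1, hx2⟩ ⟨hy1, hy2⟩
        constructor <;> simp [map_mul, hx1, hx2, hy1, hy2, mul_pow]
      inv_mem' := by
        rintro x ⟨hx1, hx2⟩
        constructor <;>
          simp [map_inv₀, hx1, hx2, inv_pow] } with hH
  have hHmem : ∀ x : Kˣ, x ∈ H ↔
      σ₁ (x : K) = (x : K) ^ m₁ ∧ σ₂ (x : K) = (x : K) ^ m₂ := fun x => Iff.rfl
  -- the equivalence between the intersection and H
  have hiff : ∀ u : K, u ∈ Gset p r a m₁ ∩ Gset p r a m₂ ↔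
      u ≠ 0 ∧ σ₁ u = u ^ m₁ ∧ σ₂ u = u ^ m₂ := by
    intro u
    rw [Set.mem_inter_iff, hmem₁, hmem₂]
    tauto
  have e : ↥(Gset p r a m₁ ∩ Gset p r a m₂) ≃ ↥H :=
    { toFun := fun u => ⟨Units.mk0 u.1 ((hiff u.1).mp u.2).1,
        by
          have h := (hiff u.1).mp u.2
          exact ⟨h.2.1, h.2.2⟩⟩
      invFun := fun x => ⟨(x.1 : K), (hiff _).mpr ⟨x.1.ne_zero, x.2.1, x.2.2⟩⟩
      left_inv := fun u => by ext; rfl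
      right_inv := fun x => by ext; rfl }
  have hcard : Nat.card ↥(Gset p r a m₁ ∩ Gset p r a m₂) = Nat.card H :=
    Nat.card_congr e
  -- H is cyclic
  haveI : Fintype H := Fintype.ofFinite _
  obtain ⟨g, hg⟩ := IsCyclic.exists_generator (α := H)
  have hord : Nat.card H = orderOf g :=
    (orderOf_eq_card_of_forall_mem_zpowers hg).symm
  rw [hcard, hord]
  -- the generator satisfies g ^ m₁ = g ^ m₂
  have hgval : ((g : Kˣ) : K) ^ m₁ = ((g : Kˣ) : K) ^ m₂ := by
    have h1 := g.2.1
    have h2 := g.2.2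
    rw [← h1, ← h2, hσeq]
  have hgpow : g ^ m₁ = g ^ m₂ := by
    ext
    push_cast
    exact hgval
  have hz : g ^ ((m₁ : ℤ) - (m₂ : ℤ)) = 1 := by
    rw [zpow_sub, zpow_natCast, zpow_natCast, hgpow, mul_inv_cancel]
  exact orderOf_dvd_iff_zpow_eq_one.mpr hz
end

section
/- Let p be a prime, r a prime dividing p-1, a ∈ 𝔽_p not an r-th power, θ a root of x^r - a, and n with a^n = a in 𝔽_p. Let A = a^(r^(α-1)) be a primitive r-th root of unity in 𝔽_p with A^n = A. If 1 + θ ∈ G_n, then 1 + A^i θ ∈ G_n for all i = 0, 1, …, r-1. -/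
open Polynomial

theorem one_add_Ai_theta_mem (p r n : ℕ) [Fact p.Prime] (hr : r.Prime)
    (hrp : r ∣ p - 1) (a : ZMod p) (ha : ¬ ∃ b : ZMod p, b ^ r = a)
    (han : a ^ n = a) (A : ZMod p) (hA : orderOf A = r) (hAn : A ^ n = A)
    (h : (1 + AdjoinRoot.root (X ^ r - C a)) ∈ Gset p r a n) :
    ∀ i < r, (1 + algebraMap (ZMod p) (AdjoinRoot (X ^ r - C a)) (A ^ i) *
      AdjoinRoot.root (X ^ r - C a)) ∈ Gset p r a n := by
  classical
  intro i _
  have hr2 : 2 ≤ r := hr.two_le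
  set θ : AdjoinRoot (X ^ r - C a) := AdjoinRoot.root (X ^ r - C a) with hθ
  set B : AdjoinRoot (X ^ r - C a) := algebraMap (ZMod p) _ A with hB
  have hθr : θ ^ r = algebraMap (ZMod p) _ a := by
    have hroot : (aeval θ) (X ^ r - C a) = 0 := by
      rw [hθ, AdjoinRoot.aeval_eq, AdjoinRoot.mk_self]
    simp only [map_sub, map_pow, aeval_X, aeval_C] at hroot
    rwa [sub_eq_zero] at hroot
  have hAr : A ^ r = 1 := by rw [← hA]; exact pow_orderOf_eq_one A
  have hBr : B ^ r = 1 := by rw [hB, ← map_pow, hAr, map_one]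
  have hBn : B ^ n = B := by rw [hB, ← map_pow, hAn]
  have halgAi : algebraMap (ZMod p) (AdjoinRoot (X ^ r - C a)) (A ^ i) = B ^ i := by
    rw [map_pow, hB]
  rw [halgAi]
  -- nonzero part
  have hne : (1 : AdjoinRoot (X ^ r - C a)) + B ^ i * θ ≠ 0 := by
    intro h0
    have hmk : AdjoinRoot.mk (X ^ r - C a) (1 + C (A ^ i) * X) = 0 := by
      rw [map_add, map_mul, AdjoinRoot.mk_C, AdjoinRoot.mk_X, map_one, ← AdjoinRoot.algebraMap_eq, halgAi, ← hθ]
      exact h0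
    rw [AdjoinRoot.mk_eq_zero] at hmk
    have hg0 : (1 + C (A ^ i) * X : Polynomial (ZMod p)) ≠ 0 := by
      intro hg
      have := congrArg (fun u => Polynomial.coeff u 0) hg
      simp at this
    have hdeg := Polynomial.natDegree_le_of_dvd hmk hg0
    have h1 : (1 + C (A ^ i) * X : Polynomial (ZMod p)).natDegree ≤ 1 := by
      apply le_trans (Polynomial.natDegree_add_le _ _)
      simp only [natDegree_one, max_le_iff]
      refine ⟨by omega, le_trans (Polynomial.natDegree_C_mul_le _ _) (by simp)⟩
    rw [Polynomial.natDegree_X_pow_sub_C] at hdeg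
    omega
  refine ⟨hne, ?_⟩
  have hkey : (1 : AdjoinRoot (X ^ r - C a)) + θ ^ n = (1 + θ) ^ n := by
    have := h.2 (1 + X) (by simp [hθ])
    simpa using this
  -- the endomorphism θ ↦ B^i * θ
  have hψ0 : (aeval (B ^ i * θ)) (X ^ r - C a) = 0 := by
    simp only [map_sub, map_pow, aeval_X, aeval_C]
    rw [mul_pow, hθr, ← pow_mul, mul_comm i r, pow_mul, hBr, one_pow, one_mul, sub_self]
  set ψ := AdjoinRoot.liftAlgHom (X ^ r - C a) (Algebra.ofId _ _) (B ^ i * θ) hψ0 with hψ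
  have hψθ : ψ θ = B ^ i * θ := AdjoinRoot.liftAlgHom_root (X ^ r - C a) (Algebra.ofId _ _) _ hψ0
  have hkey2 : (1 : AdjoinRoot (X ^ r - C a)) + B ^ i * θ ^ n = (1 + B ^ i * θ) ^ n := by
    have := congrArg ψ hkey
    simp only [map_add, map_one, map_pow, hψθ, mul_pow] at this
    rwa [← pow_mul, mul_comm i n, pow_mul, hBn] at this
  -- the hom φ : θ ↦ θ^n
  have hφ0 : (aeval (θ ^ n)) (X ^ r - C a) = 0 := by
    simp only [map_sub, map_pow, aeval_X, aeval_C]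
    rw [← pow_mul, mul_comm n r, pow_mul, hθr, ← map_pow, han, sub_self]
  intro f hf
  have hval : (aeval (θ ^ n)) f = (AdjoinRoot.liftAlgHom (X ^ r - C a) (Algebra.ofId _ _) (θ ^ n) hφ0)
      ((aeval θ) f) := by
    conv_lhs => rw [← AdjoinRoot.liftAlgHom_root (X ^ r - C a) (Algebra.ofId _ _) _ hφ0]
    rw [aeval_algHom_apply]
  rw [hval, hf]
  simp only [map_add, map_one, map_mul, map_pow, hB, AlgHom.commutes,
    AdjoinRoot.liftAlgHom_root (X ^ r - C a) (Algebra.ofId _ _) _ hφ0]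
  rw [← hB]
  rw [show (AdjoinRoot.liftAlgHom (X ^ r - C a) (Algebra.ofId _ _) (θ ^ n) hφ0) θ = θ ^ n from
    AdjoinRoot.liftAlgHom_root (X ^ r - C a) (Algebra.ofId _ _) _ hφ0]
  exact hkey2
end

section
/- Let p be a prime, r a prime dividing p-1, a not an r-th power mod p, θ a root of x^r - a, n with a^n = a mod p, and A a primitive r-th root of unity in 𝔽_p with A^n = A. If 1 + θ ∈ G_n, then |G_n| ≥ 2^r. -/
open Polynomial

set_option maxHeartbeats 1000000
set_option synthInstance.maxHeartbeats 200000

theorem card_Gn_ge (p r n : ℕ) [Fact p.Prime] (hr : r.Prime)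
    (hrp : r ∣ p - 1) (a : ZMod p) (ha : ¬ ∃ b : ZMod p, b ^ r = a)
    (han : a ^ n = a) (A : ZMod p) (hA : orderOf A = r) (hAn : A ^ n = A)
    (h : (1 + AdjoinRoot.root (X ^ r - C a)) ∈ Gset p r a n) :
    2 ^ r ≤ Nat.card ↥(Gset p r a n) := by
  classical
  have hr2 : 2 ≤ r := hr.two_le
  have hr0 : r ≠ 0 := by omega
  have irr : Irreducible (X ^ r - C a : (ZMod p)[X]) :=
    X_pow_sub_C_irreducible_of_prime hr (fun b hb => ha ⟨b, hb⟩)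
  haveI := Fact.mk irr
  set θ : AdjoinRoot (X ^ r - C a : (ZMod p)[X]) := AdjoinRoot.root _ with hθdef
  have hgmonic : (X ^ r - C a : (ZMod p)[X]).Monic := monic_X_pow_sub_C a hr0
  have hgdeg : (X ^ r - C a : (ZMod p)[X]).natDegree = r := natDegree_X_pow_sub_C
  have hA1 : A ^ r = 1 := by rw [← hA]; exact pow_orderOf_eq_one A
  have hAne : A ≠ 0 := by
    intro h0
    rw [h0, zero_pow hr0] at hA1
    exact zero_ne_one hA1
  have hθr : θ ^ r = algebraMap (ZMod p) _ a := root_X_pow_sub_C_pow r a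
  have hθne : θ ≠ 0 := root_X_pow_sub_C_ne_zero (by omega) a
  -- the Frobenius-like endomorphism θ ↦ θ^n
  have hev : aeval (θ ^ n) (X ^ r - C a : (ZMod p)[X]) = 0 := by
    simp only [map_sub, map_pow, aeval_X, aeval_C]
    rw [← pow_mul, mul_comm n r, pow_mul, hθr, ← map_pow, han, sub_self]
  set φ : AdjoinRoot (X ^ r - C a : (ZMod p)[X]) →ₐ[ZMod p]
      AdjoinRoot (X ^ r - C a : (ZMod p)[X]) := AdjoinRoot.liftAlgHom _ (Algebra.ofId _ _) (θ ^ n) hev with hφdef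
  have φ_root : φ θ = θ ^ n := AdjoinRoot.liftAlgHom_root (h := hev)
  have mem_iff : ∀ u, u ∈ Gset p r a n ↔ u ≠ 0 ∧ φ u = u ^ n := by
    intro u
    constructor
    · rintro ⟨h0, hall⟩
      refine ⟨h0, ?_⟩
      obtain ⟨f, rfl⟩ := AdjoinRoot.mk_surjective u
      show aeval (θ ^ n) f = _
      exact hall f (AdjoinRoot.aeval_eq f)
    · rintro ⟨h0, hu⟩
      refine ⟨h0, fun f hf => ?_⟩
      have : φ u = aeval (θ ^ n) f := by
        rw [← hf, AdjoinRoot.aeval_eq]; rfl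
      rw [← this, hu]
  -- the automorphisms θ ↦ A^i θ
  have hevσ : ∀ i : ℕ,
      aeval (algebraMap (ZMod p) (AdjoinRoot (X ^ r - C a : (ZMod p)[X])) (A ^ i) * θ)
        (X ^ r - C a : (ZMod p)[X]) = 0 := by
    intro i
    simp only [map_sub, map_pow, aeval_X, aeval_C]
    have h1 : (A ^ i) ^ r = 1 := by
      rw [← pow_mul, mul_comm i r, pow_mul, hA1, one_pow]
    rw [mul_pow, hθr, ← pow_mul, mul_comm i r, pow_mul, ← map_pow, hA1, map_one, one_pow,
      one_mul, sub_self]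
  set σ : ℕ → (AdjoinRoot (X ^ r - C a : (ZMod p)[X]) →ₐ[ZMod p]
      AdjoinRoot (X ^ r - C a : (ZMod p)[X])) :=
    fun i => AdjoinRoot.liftAlgHom _ (Algebra.ofId _ _) _ (hevσ i) with hσdef
  have σ_root : ∀ i, σ i θ = algebraMap (ZMod p) _ (A ^ i) * θ :=
    fun i => AdjoinRoot.liftAlgHom_root (h := hevσ i)
  have comm : ∀ i u, σ i (φ u) = φ (σ i u) := by
    intro i
    have lhs : σ i (φ θ) = algebraMap (ZMod p) _ (A ^ i) * θ ^ n := by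
      rw [φ_root, map_pow, σ_root i, mul_pow, ← map_pow, ← pow_mul, mul_comm i n, pow_mul, hAn]
    have rhs : φ (σ i θ) = algebraMap (ZMod p) _ (A ^ i) * θ ^ n := by
      rw [σ_root i, map_mul, φ_root, AlgHom.commutes]
    have hcomp : (σ i).comp φ = φ.comp (σ i) := by
      apply AdjoinRoot.algHom_ext
      simp only [AlgHom.comp_apply]
      show σ i (φ θ) = φ (σ i θ)
      rw [lhs, rhs]
    exact fun u => DFunLike.congr_fun hcomp u
  -- the basic elements 1 + A^i θ
  have hfacne : ∀ i : ℕ, (C (A ^ i) * X + C 1 : (ZMod p)[X]) ≠ 0 := by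
    intro i h0
    have := congrArg (fun q => coeff q 0) h0
    simp at this
  have hfacdeg : ∀ i : ℕ, (C (A ^ i) * X + C 1 : (ZMod p)[X]).natDegree = 1 :=
    fun i => natDegree_linear (pow_ne_zero i hAne)
  have h1θ := (mem_iff _).mp h
  have he : ∀ i, AdjoinRoot.mk _ (C (A ^ i) * X + C 1) ∈ Gset p r a n := by
    intro i
    have hei : AdjoinRoot.mk (X ^ r - C a : (ZMod p)[X]) (C (A ^ i) * X + C 1)
        = σ i (1 + θ) := by
      simp only [map_add, map_mul, map_one, AdjoinRoot.mk_X, C_1, σ_root i,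
        AdjoinRoot.algebraMap_eq, AdjoinRoot.mk_C]
      ring
    rw [mem_iff]
    constructor
    · exact AdjoinRoot.mk_ne_zero_of_natDegree_lt hgmonic (hfacne i)
        (by rw [hfacdeg, hgdeg]; omega)
    · rw [hei, ← comm i, h1θ.2, map_pow]
  -- products
  have hmul : ∀ u v, u ∈ Gset p r a n → v ∈ Gset p r a n → u * v ∈ Gset p r a n := by
    intro u v hu hv
    rw [mem_iff] at hu hv ⊢
    exact ⟨mul_ne_zero hu.1 hv.1, by rw [map_mul, hu.2, hv.2, mul_pow]⟩
  have hone : (1 : AdjoinRoot (X ^ r - C a : (ZMod p)[X])) ∈ Gset p r a n :=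
    (mem_iff _).mpr ⟨one_ne_zero, by rw [map_one, one_pow]⟩
  have hθmem : θ ∈ Gset p r a n := (mem_iff _).mpr ⟨hθne, φ_root⟩
  set P : Finset ℕ → (ZMod p)[X] := fun S => ∏ i ∈ S, (C (A ^ i) * X + C 1) with hPdef
  have hUS : ∀ S : Finset ℕ, AdjoinRoot.mk _ (P S) ∈ Gset p r a n := by
    intro S
    rw [hPdef, map_prod]
    exact Finset.prod_induction _ _ hmul hone (fun i _ => he i)
  -- degrees and evaluation facts
  have hPdeg : ∀ S : Finset ℕ, (P S).natDegree = S.card := by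
    intro S
    rw [hPdef, natDegree_prod _ _ (fun i _ => hfacne i)]
    simp only [hfacdeg]
    simp
  have hPne : ∀ S : Finset ℕ, P S ≠ 0 := by
    intro S
    exact Finset.prod_ne_zero_iff.mpr (fun i _ => hfacne i)
  have hPeval0 : ∀ S : Finset ℕ, (P S).eval 0 = 1 := by
    intro S
    rw [hPdef]
    simp [eval_prod]
  -- recovery of S from P S
  have hkey : ∀ (S : Finset ℕ), S ⊆ Finset.range r → ∀ i < r,
      ((P S).eval (-(A ^ i)⁻¹) = 0 ↔ i ∈ S) := by
    intro S hS i hi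
    rw [hPdef]
    simp only [eval_prod]
    rw [Finset.prod_eq_zero_iff]
    constructor
    · rintro ⟨j, hjS, hj0⟩
      have hj : j < r := Finset.mem_range.mp (hS hjS)
      simp only [eval_add, eval_mul, eval_C, eval_X] at hj0
      have hji : A ^ j = A ^ i := by
        have h2 : A ^ j * (A ^ i)⁻¹ = 1 := by linear_combination -hj0
        field_simp at h2
        exact h2
      have : j = i := by
        have := pow_injOn_Iio_orderOf (x := A) (by rwa [hA, Set.mem_Iio]) (by rwa [hA, Set.mem_Iio]) hji
        exact this
      exact this ▸ hjS
    · intro hiS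
      refine ⟨i, hiS, ?_⟩
      simp only [eval_add, eval_mul, eval_C, eval_X]
      rw [mul_neg, mul_inv_cancel₀ (pow_ne_zero i hAne)]
      ring
  -- injectivity
  have hmk_inj : ∀ S T : Finset ℕ, S ⊆ Finset.range r → T ⊆ Finset.range r → S.card < r →
      T.card < r → AdjoinRoot.mk (X ^ r - C a : (ZMod p)[X]) (P S) = AdjoinRoot.mk _ (P T) →
      S = T := by
    intro S T hS hT hSc hTc hST
    have hPeq : P S = P T := by
      by_contra hne
      have hdvd : (X ^ r - C a : (ZMod p)[X]) ∣ (P S - P T) := by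
        rw [← AdjoinRoot.mk_eq_zero, map_sub, sub_eq_zero]
        exact hST
      have h1 : r ≤ (P S - P T).natDegree := by
        rw [← hgdeg]
        exact natDegree_le_of_dvd hdvd (sub_ne_zero.mpr hne)
      have h2 : (P S - P T).natDegree < r := by
        refine lt_of_le_of_lt (natDegree_sub_le _ _) ?_
        rw [hPdeg, hPdeg]
        omega
      omega
    ext j
    constructor
    · intro hj
      have hjr : j < r := Finset.mem_range.mp (hS hj)
      exact (hkey T hT j hjr).mp (hPeq ▸ (hkey S hS j hjr).mpr hj)
    · intro hj
      have hjr : j < r := Finset.mem_range.mp (hT hj)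
      exact (hkey S hS j hjr).mp (hPeq.symm ▸ (hkey T hT j hjr).mpr hj)
  -- θ is not one of the products
  have hθnotP : ∀ S : Finset ℕ, S.card < r → θ ≠ AdjoinRoot.mk _ (P S) := by
    intro S hSc heq
    have hdvd : (X ^ r - C a : (ZMod p)[X]) ∣ (X - P S) := by
      rw [← AdjoinRoot.mk_eq_zero, map_sub, sub_eq_zero, AdjoinRoot.mk_X]
      exact heq
    have hne : (X - P S : (ZMod p)[X]) ≠ 0 := by
      intro h0
      have := congrArg (eval 0) h0
      rw [eval_sub, eval_X, hPeval0] at this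
      simp at this
    have h1 : r ≤ (X - P S).natDegree := by
      rw [← hgdeg]
      exact natDegree_le_of_dvd hdvd hne
    have h2 : (X - P S).natDegree < r := by
      refine lt_of_le_of_lt (natDegree_sub_le _ _) ?_
      rw [hPdeg, natDegree_X]
      omega
    omega
  -- build the finset of 2^r elements
  set F0 : Finset (AdjoinRoot (X ^ r - C a : (ZMod p)[X])) :=
    ((Finset.range r).powerset.erase (Finset.range r)).image
      (fun S => AdjoinRoot.mk _ (P S)) with hF0def
  have hcardlt : ∀ S ∈ (Finset.range r).powerset.erase (Finset.range r), S.card < r := by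
    intro S hS
    rw [Finset.mem_erase, Finset.mem_powerset] at hS
    have := Finset.card_lt_card (lt_of_le_of_ne hS.2 hS.1)
    simpa using this
  have hsubR : ∀ S ∈ (Finset.range r).powerset.erase (Finset.range r), S ⊆ Finset.range r := by
    intro S hS
    rw [Finset.mem_erase, Finset.mem_powerset] at hS
    exact hS.2
  have hF0card : F0.card = 2 ^ r - 1 := by
    rw [hF0def, Finset.card_image_of_injOn
      (fun S hS T hT => hmk_inj S T (hsubR S hS) (hsubR T hT) (hcardlt S hS) (hcardlt T hT)),
      Finset.card_erase_of_mem (Finset.mem_powerset_self _), Finset.card_powerset,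
      Finset.card_range]
  have hθnot : θ ∉ F0 := by
    rw [hF0def, Finset.mem_image]
    rintro ⟨S, hS, heq⟩
    exact hθnotP S (hcardlt S hS) heq.symm
  set F : Finset (AdjoinRoot (X ^ r - C a : (ZMod p)[X])) := insert θ F0 with hFdef
  have hFcard : F.card = 2 ^ r := by
    rw [hFdef, Finset.card_insert_of_notMem hθnot, hF0card]
    have : 1 ≤ 2 ^ r := Nat.one_le_two_pow
    omega
  have hsub : (↑F : Set (AdjoinRoot (X ^ r - C a : (ZMod p)[X]))) ⊆ Gset p r a n := by
    intro u hu
    rw [hFdef] at hu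
    simp only [Finset.coe_insert, Set.mem_insert_iff, hF0def, Finset.coe_image,
      Set.mem_image] at hu
    rcases hu with rfl | ⟨S, _, rfl⟩
    · exact hθmem
    · exact hUS S
  -- finiteness
  haveI : Module.Finite (ZMod p) (AdjoinRoot (X ^ r - C a : (ZMod p)[X])) :=
    Module.Finite.of_basis (AdjoinRoot.powerBasis hgmonic.ne_zero).basis
  haveI : Finite (AdjoinRoot (X ^ r - C a : (ZMod p)[X])) := Module.finite_of_finite (ZMod p)
  have hfin : (Gset p r a n).Finite := Set.toFinite _
  calc 2 ^ r = F.card := hFcard.symm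
    _ = (↑F : Set (AdjoinRoot (X ^ r - C a : (ZMod p)[X]))).ncard := (Set.ncard_coe_finset F).symm
    _ ≤ (Gset p r a n).ncard := Set.ncard_le_ncard hsub hfin
    _ = Nat.card ↥(Gset p r a n) := (Nat.card_coe_set_eq _).symm
end

section
/- The elements of the set { ∏_{i=0}^{r-1} (1 + A^i θ)^{ε_i} : ε_i ∈ {0,1}, ∑_{i=0}^{r-1} ε_i < r } in 𝔽_p(θ) are pairwise distinct, and this set has cardinality 2^r - 1; in particular its cardinality is at least 2^(r-1). -/
open Polynomial

theorem products_pairwise_distinct (p r : ℕ) [Fact p.Prime] (hr : r.Prime)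
    (hrp : r ∣ p - 1) (a : ZMod p) (ha : ¬ ∃ b : ZMod p, b ^ r = a)
    (A : ZMod p) (hA : orderOf A = r) :
    Set.InjOn
      (fun s : Finset (Fin r) => ∏ i ∈ s,
        (1 + algebraMap (ZMod p) (AdjoinRoot (X ^ r - C a)) (A ^ (i : ℕ)) *
          AdjoinRoot.root (X ^ r - C a)))
      {s : Finset (Fin r) | s ≠ Finset.univ} ∧
    Nat.card ↥((fun s : Finset (Fin r) => ∏ i ∈ s,
        (1 + algebraMap (ZMod p) (AdjoinRoot (X ^ r - C a)) (A ^ (i : ℕ)) *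
          AdjoinRoot.root (X ^ r - C a))) ''
      {s : Finset (Fin r) | s ≠ Finset.univ}) = 2 ^ r - 1 ∧
    2 ^ (r - 1) ≤ Nat.card ↥((fun s : Finset (Fin r) => ∏ i ∈ s,
        (1 + algebraMap (ZMod p) (AdjoinRoot (X ^ r - C a)) (A ^ (i : ℕ)) *
          AdjoinRoot.root (X ^ r - C a))) ''
      {s : Finset (Fin r) | s ≠ Finset.univ}) := by
  have hr0 : 0 < r := hr.pos
  have hAr : A ^ r = 1 := by rw [← hA]; exact pow_orderOf_eq_one A
  have hA0 : A ≠ 0 := by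
    rintro rfl
    rw [zero_pow hr.ne_zero] at hAr
    exact zero_ne_one hAr
  have hApow : ∀ i : ℕ, A ^ i ≠ 0 := fun i => pow_ne_zero i hA0
  have hAU : IsUnit A := IsUnit.of_pow_eq_one hAr hr.ne_zero
  have hAinj : ∀ i j : Fin r, A ^ (i : ℕ) = A ^ (j : ℕ) → i = j := by
    intro i j hij
    have : hAU.unit ^ (i : ℕ) = hAU.unit ^ (j : ℕ) := by
      ext; simpa using hij
    rw [pow_eq_pow_iff_modEq] at this
    rw [← orderOf_units, hAU.unit_spec, hA] at this
    exact Fin.ext (by simpa [Nat.ModEq, Nat.mod_eq_of_lt i.isLt, Nat.mod_eq_of_lt j.isLt] using this)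
  set f : (ZMod p)[X] := X ^ r - C a with hf
  have hdegf : f.degree = r := degree_X_pow_sub_C hr0 a
  set P : Finset (Fin r) → (ZMod p)[X] := fun s => ∏ i ∈ s, (C (A ^ (i : ℕ)) * X + 1) with hP
  -- the product equals mk f (P s)
  have hmk : ∀ s : Finset (Fin r),
      (∏ i ∈ s, (1 + algebraMap (ZMod p) (AdjoinRoot f) (A ^ (i : ℕ)) * AdjoinRoot.root f))
        = AdjoinRoot.mk f (P s) := by
    intro s
    rw [hP, map_prod]
    refine Finset.prod_congr rfl fun i _ => ?_
    rw [map_add, map_mul, map_one, AdjoinRoot.mk_X, add_comm]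
    congr 1
  have hdegP : ∀ s : Finset (Fin r), (P s).degree = s.card := by
    intro s
    rw [hP]
    simp only
    rw [degree_prod]
    have : ∀ i ∈ s, (C (A ^ (i : ℕ)) * X + 1).degree = 1 := by
      intro i _
      have := degree_linear (a := A ^ (i : ℕ)) (b := (1 : ZMod p)) (hApow _)
      simpa using this
    rw [Finset.sum_congr rfl this]
    simp
  -- injectivity
  have hinj : Set.InjOn
      (fun s : Finset (Fin r) => ∏ i ∈ s,
        (1 + algebraMap (ZMod p) (AdjoinRoot f) (A ^ (i : ℕ)) * AdjoinRoot.root f))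
      {s : Finset (Fin r) | s ≠ Finset.univ} := by
    intro s hs t ht hst
    simp only [hmk] at hst
    rw [AdjoinRoot.mk_eq_mk] at hst
    have hcard : ∀ u : Finset (Fin r), u ≠ Finset.univ → (u.card : ℕ) < r := by
      intro u hu
      have := Finset.card_lt_card (Finset.ssubset_univ_iff.mpr hu)
      simpa using this
    have hdlt : (P s - P t).degree < f.degree := by
      rw [hdegf]
      refine lt_of_le_of_lt (degree_sub_le _ _) ?_
      rw [max_lt_iff, hdegP, hdegP]
      exact ⟨by exact_mod_cast Nat.cast_lt.mpr (hcard s hs), by exact_mod_cast Nat.cast_lt.mpr (hcard t ht)⟩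
    have hPst : P s = P t := by
      exact sub_eq_zero.mp (Polynomial.eq_zero_of_dvd_of_degree_lt hst hdlt)
    -- membership characterization
    have hmem : ∀ (u : Finset (Fin r)) (j : Fin r),
        j ∈ u ↔ (P u).eval (-(A ^ (j : ℕ))⁻¹) = 0 := by
      intro u j
      rw [hP]
      simp only [eval_prod, eval_add, eval_mul, eval_C, eval_X, eval_one]
      constructor
      · intro hj
        refine Finset.prod_eq_zero hj ?_
        field_simp
        ring
      · intro h
        rw [Finset.prod_eq_zero_iff] at h
        obtain ⟨i, hi, hzero⟩ := h
        have : A ^ (i : ℕ) = A ^ (j : ℕ) := by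
          field_simp at hzero
          linear_combination -hzero
        rwa [hAinj i j this] at hi
    ext j
    rw [hmem s j, hmem t j, hPst]
  refine ⟨hinj, ?_, ?_⟩
  · rw [Nat.card_coe_set_eq, Set.ncard_image_of_injOn hinj, Set.ncard_eq_toFinset_card',
      Set.toFinset_setOf, Finset.filter_ne', Finset.card_erase_of_mem (Finset.mem_univ _),
      Finset.card_univ, Fintype.card_finset, Fintype.card_fin]
  · rw [Nat.card_coe_set_eq, Set.ncard_image_of_injOn hinj, Set.ncard_eq_toFinset_card',
      Set.toFinset_setOf, Finset.filter_ne', Finset.card_erase_of_mem (Finset.mem_univ _),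
      Finset.card_univ, Fintype.card_finset, Fintype.card_fin]
    have h1 : 1 ≤ 2 ^ (r - 1) := Nat.one_le_two_pow
    have h2 : 2 ^ r = 2 ^ (r - 1) * 2 := by
      rw [← pow_succ]; congr 1; omega
    omega
end

section
/- (Main theorem) Let n be a positive integer which is not a perfect power (not of the form m^k with k ≥ 2). Suppose there exists a prime r with r^α || n-1 for some α ≥ 1 and r ≥ (log₂ n)², and an integer 1 < a < n such that a^(r^α) ≡ 1 (mod n), gcd(a^(r^(α-1)) - 1, n) = 1, and (1 + x)^n ≡ 1 + x^n in the ring (ℤ/nℤ)[x]/(x^r - a). Then n is prime. -/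
open Polynomial

lemma pow_congr_of_pow_eq_one {M : Type*} [Monoid M] {x : M} {s : ℕ} (hs : x ^ s = 1)
    {u v : ℕ} (huv : u ≡ v [MOD s]) : x ^ u = x ^ v := by
  have h : ∀ w : ℕ, x ^ w = x ^ (w % s) := by
    intro w
    conv_lhs => rw [← Nat.div_add_mod w s]
    rw [pow_add, pow_mul, hs, one_pow, one_mul]
  rw [h u, h v, huv]

lemma all_primes_one_mod {M : ℕ} : ∀ n : ℕ, 0 < n →
    (∀ p : ℕ, p.Prime → p ∣ n → p ≡ 1 [MOD M]) → n ≡ 1 [MOD M] := by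
  intro n
  induction n using Nat.strong_induction_on with
  | _ n ih =>
    intro hn h
    rcases eq_or_lt_of_le (show 1 ≤ n from hn) with h1 | h1
    · exact h1 ▸ Nat.ModEq.refl 1
    · set p := n.minFac with hp
      have hpp : p.Prime := Nat.minFac_prime (by omega)
      have hpd : p ∣ n := Nat.minFac_dvd n
      obtain ⟨m, hm⟩ := hpd
      have hp2 : 2 ≤ p := hpp.two_le
      have hm0 : 0 < m := by
        rcases Nat.eq_zero_or_pos m with h0 | h0
        · subst h0; simp at hm; omega
        · exact h0
      have hmn : m < n := by
        have : 1 * m < p * m := by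
          apply Nat.mul_lt_mul_of_lt_of_le (by omega) le_rfl hm0
        omega
      have hmmod : m ≡ 1 [MOD M] := by
        apply ih m hmn hm0
        intro q hq hqm
        exact h q hq (hm ▸ Dvd.dvd.mul_left hqm p)
      have hpmod : p ≡ 1 [MOD M] := h p hpp ⟨m, hm⟩
      calc n = p * m := hm
        _ ≡ 1 * 1 [MOD M] := hpmod.mul hmmod
        _ = 1 := by ring

lemma intro_mul {A : Type*} [CommRing A] {b : A} {r m m' : ℕ} (hbm : b ^ m = b)
    (h1 : (X ^ r - C b) ∣ ((1 + X) ^ m - (1 + X ^ m)))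
    (h2 : (X ^ r - C b) ∣ ((1 + X) ^ m' - (1 + X ^ m'))) :
    (X ^ r - C b) ∣ ((1 + X) ^ (m * m') - (1 + X ^ (m * m'))) := by
  set f : A[X] := X ^ r - C b with hf
  have key : f ∣ ((X : A[X]) ^ m) ^ r - C b := by
    have e : ((X : A[X]) ^ m) ^ r - C b = ((X ^ r) ^ m - (C b) ^ m) := by
      rw [← map_pow, hbm, ← pow_mul, ← pow_mul, Nat.mul_comm]
    rw [e]
    exact sub_dvd_pow_sub_pow _ _ m
  have step1 : f ∣ ((1 + X) ^ m) ^ m' - (1 + X ^ m) ^ m' :=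
    dvd_trans h1 (sub_dvd_pow_sub_pow _ _ m')
  have step2 : f ∣ (1 + X ^ m) ^ m' - (1 + (X ^ m) ^ m') := by
    obtain ⟨k, hk⟩ := h2
    have hcomp : ((1 + X : A[X]) ^ m' - (1 + X ^ m')).comp (X ^ m)
        = (((X : A[X]) ^ m) ^ r - C b) * k.comp (X ^ m) := by
      rw [hk]; simp [mul_comp, sub_comp, pow_comp, add_comp, hf]
    have : (1 + X ^ m) ^ m' - (1 + (X ^ m) ^ m')
        = ((1 + X : A[X]) ^ m' - (1 + X ^ m')).comp (X ^ m) := by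
      simp [sub_comp, pow_comp, add_comp]
    rw [this, hcomp]
    exact Dvd.dvd.mul_right key _
  have e : (1 + X : A[X]) ^ (m * m') - (1 + X ^ (m * m'))
      = (((1 + X) ^ m) ^ m' - (1 + X ^ m) ^ m')
        + ((1 + X ^ m) ^ m' - (1 + (X ^ m) ^ m')) := by
    rw [← pow_mul, ← pow_mul]; ring
  rw [e]
  exact dvd_add step1 step2

lemma aux_num {n r : ℕ} (hn : 2 ≤ n) (hrp : r.Prime)
    (hrbig : (Real.logb 2 n) ^ 2 ≤ (r : ℝ)) : n ^ (Nat.sqrt r) < 2 ^ r := by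
  set B := Nat.sqrt r with hB
  have hr2 : 2 ≤ r := hrp.two_le
  have hBB : B * B ≤ r := by have := Nat.sqrt_le' r; nlinarith [this]
  have hne : B * B ≠ r := by
    intro h
    rcases hrp.eq_one_or_self_of_dvd B ⟨B, h.symm⟩ with h1 | h1
    · rw [h1] at h; omega
    · rw [h1] at h; nlinarith
  have hBBr : B * B ≤ r - 1 := by omega
  have hcast : ((B:ℝ)) * (B:ℝ) ≤ (r:ℝ) - 1 := by
    have h1 : ((B * B : ℕ) : ℝ) ≤ ((r - 1 : ℕ) : ℝ) := by exact_mod_cast hBBr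
    have h2 : ((r - 1 : ℕ) : ℝ) = (r:ℝ) - 1 := by
      rw [Nat.cast_sub (by omega)]; norm_num
    push_cast at h1; linarith [h2 ▸ h1]
  set L := Real.logb 2 n with hL
  have hn1 : (1:ℝ) < (n:ℝ) := by exact_mod_cast hn.trans' (by norm_num)
  have hL0 : 0 ≤ L := Real.logb_nonneg (by norm_num) (le_of_lt hn1)
  have hr0 : (0:ℝ) ≤ (r:ℝ) := by positivity
  have hr1 : (1:ℝ) ≤ (r:ℝ) := by exact_mod_cast hr2.trans' (by norm_num)
  have hLsqrt : L ≤ Real.sqrt r := (Real.le_sqrt hL0 hr0).mpr hrbig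
  have hBsqrt : (B:ℝ) ≤ Real.sqrt ((r:ℝ) - 1) := by
    apply (Real.le_sqrt (by positivity) (by linarith)).mpr
    rw [sq]; exact hcast
  have key : (B:ℝ) * L < (r:ℝ) := by
    have h1 : (B:ℝ) * L ≤ Real.sqrt ((r:ℝ) - 1) * Real.sqrt r :=
      mul_le_mul hBsqrt hLsqrt hL0 (Real.sqrt_nonneg _)
    have h2 : Real.sqrt ((r:ℝ) - 1) * Real.sqrt r = Real.sqrt (((r:ℝ) - 1) * r) :=
      (Real.sqrt_mul (by linarith) _).symm
    have h3 : Real.sqrt (((r:ℝ) - 1) * r) < Real.sqrt ((r:ℝ) * r) := by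
      apply Real.sqrt_lt_sqrt (by nlinarith)
      nlinarith
    have h4 : Real.sqrt ((r:ℝ) * r) = r := by
      rw [Real.sqrt_mul_self hr0]
    linarith
  have hnL : (n:ℝ) = (2:ℝ) ^ L := (Real.rpow_logb (by norm_num) (by norm_num) (by linarith)).symm
  have main : ((n ^ B : ℕ) : ℝ) < ((2 ^ r : ℕ) : ℝ) := by
    push_cast
    rw [hnL, ← Real.rpow_natCast ((2:ℝ) ^ L) B, ← Real.rpow_mul (by norm_num),
      ← Real.rpow_natCast (2:ℝ) r]
    apply Real.rpow_lt_rpow_left_iff (x := (2:ℝ)) (by norm_num) |>.mpr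
    linarith [key]
  exact_mod_cast main

lemma prod_linear_inj {F : Type*} [Field F] {ζ : F} {r : ℕ} (hord : orderOf ζ = r) (hr : 0 < r)
    {S S' : Finset (Fin r)}
    (h : (∏ i ∈ S, (1 + C (ζ ^ (i : ℕ)) * X)) = ∏ i ∈ S', (1 + C (ζ ^ (i : ℕ)) * X)) :
    S = S' := by
  have hζ1 : ζ ^ r = 1 := hord ▸ pow_orderOf_eq_one ζ
  have hζ0 : ζ ≠ 0 := by
    intro h0
    rw [h0, zero_pow (by omega)] at hζ1
    exact zero_ne_one hζ1
  have key : ∀ (T T' : Finset (Fin r)) (i : Fin r), i ∈ T' → i ∉ T →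
      (∏ j ∈ T, (1 + C (ζ ^ (j : ℕ)) * X)) = (∏ j ∈ T', (1 + C (ζ ^ (j : ℕ)) * X)) →
      False := by
    intro T T' i hiT' hiT heq
    set x : F := -(ζ ^ (i : ℕ))⁻¹ with hx
    have hzero : eval x (∏ j ∈ T', (1 + C (ζ ^ (j : ℕ)) * X)) = 0 := by
      rw [eval_prod]
      apply Finset.prod_eq_zero hiT'
      simp [hx]
      rw [mul_inv_cancel₀ (pow_ne_zero _ hζ0)]
      ring
    have hnonzero : eval x (∏ j ∈ T, (1 + C (ζ ^ (j : ℕ)) * X)) ≠ 0 := by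
      rw [eval_prod]
      apply Finset.prod_ne_zero_iff.mpr
      intro j hj
      simp [hx]
      intro habs
      have hji : ζ ^ (j : ℕ) = ζ ^ (i : ℕ) := by
        have hne0 : (ζ ^ (i : ℕ)) ≠ 0 := pow_ne_zero _ hζ0
        field_simp at habs
        linear_combination -habs
      have hvals : (j : ℕ) = (i : ℕ) := by
        apply pow_injOn_Iio_orderOf (x := ζ) ?_ ?_ hji
        · show (j : ℕ) ∈ Set.Iio (orderOf ζ); rw [hord]; exact j.isLt
        · show (i : ℕ) ∈ Set.Iio (orderOf ζ); rw [hord]; exact i.isLt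
      exact hiT (Fin.ext hvals ▸ hj)
    rw [heq] at hnonzero
    exact hnonzero hzero
  by_contra hne
  rcases Finset.not_subset.mp (fun hc => hne (Finset.Subset.antisymm hc (fun j hj => by
      by_contra hjS
      exact key S S' j hj hjS h))) with ⟨i, hiS, hiS'⟩
  exact key S' S i hiS hiS' h.symm

theorem main_theorem (n r α a : ℕ) (hn : 0 < n)
    (hpow : ¬ ∃ m k : ℕ, 2 ≤ k ∧ n = m ^ k)
    (hr : r.Prime) (hα : 1 ≤ α)
    (hdvd : r ^ α ∣ n - 1) (hndvd : ¬ r ^ (α + 1) ∣ n - 1)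
    (hrbig : (Real.logb 2 n) ^ 2 ≤ (r : ℝ))
    (ha1 : 1 < a) (han : a < n)
    (hord : a ^ (r ^ α) ≡ 1 [MOD n])
    (hgcd : Nat.gcd (a ^ (r ^ (α - 1)) - 1) n = 1)
    (hpoly : (1 + AdjoinRoot.root (X ^ r - C (a : ZMod n))) ^ n =
      1 + (AdjoinRoot.root (X ^ r - C (a : ZMod n))) ^ n) :
    n.Prime := by
  have hn3 : 3 ≤ n := by omega
  have hr2 : 2 ≤ r := hr.two_le
  have hrα : 2 ≤ r ^ α := le_trans hr2 (Nat.le_self_pow (by omega) r)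
  -- choose a prime p ∣ n with r^(α+1) ∤ p - 1
  obtain ⟨p, hp, hpn, hpne1⟩ :
      ∃ p : ℕ, p.Prime ∧ p ∣ n ∧ ¬ ((r : ℕ) ^ (α + 1) ∣ p - 1) := by
    by_contra hc
    push_neg at hc
    have hall : ∀ q : ℕ, q.Prime → q ∣ n → q ≡ 1 [MOD r ^ (α + 1)] := by
      intro q hq hqn
      have := hc q hq hqn
      exact ((Nat.modEq_iff_dvd' hq.one_le).mpr this).symm
    have := all_primes_one_mod n hn hall
    exact hndvd ((Nat.modEq_iff_dvd' (by omega)).mp this.symm)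
  haveI hfp : Fact p.Prime := ⟨hp⟩
  have hp2 : 2 ≤ p := hp.two_le
  -- basic mod-p facts about a
  set b : ZMod p := (a : ZMod p) with hbdef
  have hb1 : b ^ (r ^ α) = 1 := by
    have h1 : a ^ (r ^ α) ≡ 1 [MOD p] := (hord.of_dvd hpn)
    have := (ZMod.natCast_eq_natCast_iff _ _ _).mpr h1
    push_cast at this
    exact this
  have hbne : b ^ (r ^ (α - 1)) ≠ 1 := by
    intro hb
    have h1 : ((a ^ (r ^ (α-1)) : ℕ) : ZMod p) = ((1 : ℕ) : ZMod p) := by push_cast; exact hb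
    have h2 : a ^ (r ^ (α-1)) ≡ 1 [MOD p] := (ZMod.natCast_eq_natCast_iff _ _ _).mp h1
    have h3 : p ∣ a ^ (r ^ (α-1)) - 1 := (Nat.modEq_iff_dvd' (Nat.one_le_pow _ _ (by omega))).mp h2.symm
    have h4 : p ∣ Nat.gcd (a ^ (r ^ (α - 1)) - 1) n := Nat.dvd_gcd h3 hpn
    rw [hgcd] at h4
    have := Nat.le_of_dvd one_pos h4
    omega
  have hb0 : b ≠ 0 := by
    intro h0
    rw [h0, zero_pow (by positivity)] at hb1
    exact zero_ne_one hb1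
  have hordb : orderOf b = r ^ α := by
    have hdvd1 : orderOf b ∣ r ^ α := orderOf_dvd_of_pow_eq_one hb1
    obtain ⟨k, hk, hbk⟩ := (Nat.dvd_prime_pow hr).mp hdvd1
    rcases Nat.lt_or_ge k α with hkα | hkα
    · exfalso
      apply hbne
      have : b ^ orderOf b = 1 := pow_orderOf_eq_one b
      calc b ^ (r ^ (α-1)) = (b ^ (r ^ k)) ^ (r ^ (α - 1 - k)) := by
            have he : k + (α - 1 - k) = α - 1 := by omega
            rw [← pow_mul, ← pow_add, he]
        _ = 1 := by rw [← hbk, pow_orderOf_eq_one, one_pow]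
    · have : k = α := by omega
      rw [hbk, this]
  have hMp : r ^ α ∣ p - 1 := by
    rw [← hordb]
    have : b ^ (p - 1) = 1 := ZMod.pow_card_sub_one_eq_one hb0
    exact orderOf_dvd_of_pow_eq_one this
  -- p ≡ 1 [MOD r^α], n ≡ 1 [MOD r^α]
  have hpmod : p ≡ 1 [MOD r ^ α] := ((Nat.modEq_iff_dvd' hp.one_le).mpr hMp).symm
  have hnmod : n ≡ 1 [MOD r ^ α] := ((Nat.modEq_iff_dvd' (by omega)).mpr hdvd).symm
  -- c' with p - 1 = r^α * c', r ∤ c'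
  set c' : ℕ := (p - 1) / r ^ α with hc'def
  have hc' : p - 1 = r ^ α * c' := (Nat.mul_div_cancel' hMp).symm
  have hrc' : ¬ r ∣ c' := by
    intro ⟨k, hk⟩
    apply hpne1
    rw [hk] at hc'
    exact ⟨k, by rw [hc']; ring⟩
  -- b is not an r-th power
  have hnrp : ∀ c : ZMod p, c ^ r ≠ b := by
    intro c hc
    have hc0 : c ≠ 0 := by
      intro h0; rw [h0, zero_pow (by omega)] at hc; exact hb0 hc.symm
    have h1 : c ^ (r ^ (α + 1)) = 1 := by
      have : r ^ (α + 1) = r * r ^ α := by rw [pow_succ]; ring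
      rw [this, pow_mul, hc, hb1]
    have h2 : orderOf c ∣ r ^ (α + 1) := orderOf_dvd_of_pow_eq_one h1
    obtain ⟨k, hk, hck⟩ := (Nat.dvd_prime_pow hr).mp h2
    have hkbig : k = α + 1 := by
      by_contra hkne
      have hkle : k ≤ α := by omega
      apply hbne
      calc b ^ (r ^ (α-1)) = c ^ (r * r ^ (α - 1)) := by rw [pow_mul, hc]
        _ = (c ^ (r ^ k)) ^ (r ^ (α - k)) := by
            have he : r * r ^ (α - 1) = r ^ k * r ^ (α - k) := by
              rw [← pow_succ', ← pow_add]
              congr 1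
              omega
            rw [← pow_mul, he]
        _ = 1 := by rw [← hck, pow_orderOf_eq_one, one_pow]
    -- orderOf c = r^(α+1) divides p - 1 : contradiction
    apply hpne1
    rw [← hkbig, ← hck]
    exact orderOf_dvd_of_pow_eq_one (ZMod.pow_card_sub_one_eq_one hc0)
  -- the Kummer polynomial is irreducible
  have hirr : Irreducible ((X : (ZMod p)[X]) ^ r - C b) :=
    X_pow_sub_C_irreducible_of_prime hr hnrp
  haveI hirrFact : Fact (Irreducible ((X : (ZMod p)[X]) ^ r - C b)) := ⟨hirr⟩
  -- the field K = F_p[X]/(X^r - b)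
  set f : (ZMod p)[X] := X ^ r - C b with hfdef
  haveI hirrFact2 : Fact (Irreducible f) := hirrFact
  haveI hcharK : CharP (AdjoinRoot f) p :=
    charP_of_injective_algebraMap (algebraMap (ZMod p) (AdjoinRoot f)).injective p
  set θ : AdjoinRoot f := AdjoinRoot.root f with hθdef
  have hθr : θ ^ r = algebraMap (ZMod p) (AdjoinRoot f) b := by
    have h0 : (AdjoinRoot.mk f) (X ^ r - C b) = 0 := by
      rw [← hfdef]; exact AdjoinRoot.mk_self
    rw [map_sub, map_pow, AdjoinRoot.mk_X, AdjoinRoot.mk_C, sub_eq_zero] at h0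
    rw [hθdef, h0, AdjoinRoot.algebraMap_eq]
  have hθM : θ ^ (r ^ α) = algebraMap (ZMod p) (AdjoinRoot f) (b ^ (r ^ (α - 1))) := by
    have he : r ^ α = r * r ^ (α - 1) := by
      rw [← pow_succ']
      congr 1
      omega
    rw [he, pow_mul, hθr, ← map_pow]
  have hθtop : θ ^ (r ^ (α + 1)) = 1 := by
    have he : r ^ (α + 1) = r ^ α * r := by rw [pow_succ]
    rw [he, pow_mul, hθM, ← map_pow, ← pow_mul]
    have he2 : r ^ (α - 1) * r = r ^ α := by
      rw [← pow_succ]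
      congr 1
      omega
    rw [he2, hb1, map_one]
  have hθnot : θ ^ (r ^ α) ≠ 1 := by
    rw [hθM]
    intro habs
    apply hbne
    have h1 : algebraMap (ZMod p) (AdjoinRoot f) (b ^ (r ^ (α - 1)))
        = algebraMap (ZMod p) (AdjoinRoot f) 1 := by rw [map_one]; exact habs
    exact (algebraMap (ZMod p) (AdjoinRoot f)).injective h1
  have hordθ : orderOf θ = r ^ (α + 1) := by
    have hdvd1 : orderOf θ ∣ r ^ (α + 1) := orderOf_dvd_of_pow_eq_one hθtop
    obtain ⟨k, hk, hθk⟩ := (Nat.dvd_prime_pow hr).mp hdvd1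
    have : k = α + 1 := by
      by_contra hkne
      apply hθnot
      calc θ ^ (r ^ α) = (θ ^ (r ^ k)) ^ (r ^ (α - k)) := by
            have he : k + (α - k) = α := by omega
            rw [← pow_mul, ← pow_add, he]
        _ = 1 := by rw [← hθk, pow_orderOf_eq_one, one_pow]
    rw [hθk, this]
  -- introspection
  have hbpow : ∀ m : ℕ, m ≡ 1 [MOD r ^ α] → b ^ m = b := by
    intro m hm
    have := pow_congr_of_pow_eq_one hb1 hm
    rwa [pow_one] at this
  have hmod1 : ∀ i j : ℕ, n ^ i * p ^ j ≡ 1 [MOD r ^ α] := by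
    intro i j
    have h1 : n ^ i * p ^ j ≡ 1 ^ i * 1 ^ j [MOD r ^ α] := (hnmod.pow i).mul (hpmod.pow j)
    simpa using h1
  have hIn : f ∣ (1 + X) ^ n - (1 + X ^ n) := by
    set g : (ZMod n)[X] := X ^ r - C (a : ZMod n) with hgdef
    have h1 : AdjoinRoot.mk g ((1 + X) ^ n) = AdjoinRoot.mk g (1 + X ^ n) := by
      rw [map_pow, map_add, map_one, AdjoinRoot.mk_X, map_add, map_one, map_pow,
        AdjoinRoot.mk_X]
      exact hpoly
    have h2 : g ∣ (1 + X) ^ n - (1 + X ^ n) := AdjoinRoot.mk_eq_mk.mp h1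
    have h3 := Polynomial.map_dvd (ZMod.castHom hpn (ZMod p)) h2
    have h4 : Polynomial.map (ZMod.castHom hpn (ZMod p)) g = f := by
      rw [hgdef, hfdef, Polynomial.map_sub, Polynomial.map_pow, Polynomial.map_X,
        Polynomial.map_C, map_natCast]
    have h5 : Polynomial.map (ZMod.castHom hpn (ZMod p)) ((1 + X) ^ n - (1 + X ^ n))
        = (1 + X) ^ n - (1 + X ^ n) := by
      rw [Polynomial.map_sub, Polynomial.map_pow, Polynomial.map_add, Polynomial.map_one,
        Polynomial.map_X, Polynomial.map_add, Polynomial.map_one, Polynomial.map_pow,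
        Polynomial.map_X]
    rw [h4, h5] at h3
    exact h3
  have hIp : f ∣ (1 + X) ^ p - (1 + X ^ p) := by
    have h1 : ((1 : (ZMod p)[X]) + X) ^ p = 1 ^ p + X ^ p := add_pow_char 1 X p
    rw [h1, one_pow, sub_self]
    exact dvd_zero f
  have hIall : ∀ i j : ℕ, f ∣ (1 + X) ^ (n ^ i * p ^ j) - (1 + X ^ (n ^ i * p ^ j)) := by
    intro i
    induction i with
    | zero =>
      intro j
      induction j with
      | zero => simp
      | succ j ihj =>
        have he : n ^ 0 * p ^ (j + 1) = (n ^ 0 * p ^ j) * p := by ring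
        rw [he]
        exact intro_mul (hbpow _ (hmod1 0 j)) ihj hIp
    | succ i ihi =>
      intro j
      have he : n ^ (i + 1) * p ^ j = (n ^ i * p ^ j) * n := by ring
      rw [he]
      exact intro_mul (hbpow _ (hmod1 i j)) (ihi j) hIn
  have hIntro : ∀ m : ℕ, (f ∣ (1 + X) ^ m - (1 + X ^ m)) → (1 + θ) ^ m = 1 + θ ^ m := by
    intro m hm
    have h1 : AdjoinRoot.mk f ((1 + X) ^ m) = AdjoinRoot.mk f (1 + X ^ m) :=
      AdjoinRoot.mk_eq_mk.mpr hm
    rw [map_pow, map_add, map_one, AdjoinRoot.mk_X, map_add, map_one, map_pow,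
      AdjoinRoot.mk_X] at h1
    rw [hθdef]
    exact h1
  -- the root of unity ζ
  have hepow : r ^ (α - 1) * r = r ^ α := by
    rw [← pow_succ]
    congr 1
    omega
  set ζ0 : ZMod p := b ^ (r ^ (α - 1)) with hζ0def
  have hordζ0 : orderOf ζ0 = r := by
    rw [hζ0def, orderOf_pow' b (by positivity : r ^ (α - 1) ≠ 0), hordb,
      Nat.gcd_eq_right (pow_dvd_pow r (by omega)), ← hepow,
      Nat.mul_div_cancel_left r (by positivity)]
  set ζ : AdjoinRoot f := algebraMap (ZMod p) (AdjoinRoot f) ζ0 with hζdef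
  have hζr : ζ ^ r = 1 := by
    rw [hζdef, ← map_pow, hζ0def, ← pow_mul, hepow, hb1, map_one]
  have hζmod : ∀ u v : ℕ, u ≡ v [MOD r] → ζ ^ u = ζ ^ v :=
    fun u v h => pow_congr_of_pow_eq_one hζr h
  have hζθ : θ ^ (r ^ α) = ζ := hθM
  have hθp : θ ^ p = ζ ^ c' * θ := by
    have h1 : θ ^ p = θ ^ (p - 1) * θ := by
      rw [← pow_succ]
      congr 1
      omega
    have h2 : θ ^ (p - 1) = ζ ^ c' := by
      rw [hc', pow_mul, hζθ]
    rw [h1, h2]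
  have hpr1 : p ≡ 1 [MOD r] := hpmod.of_dvd (dvd_pow_self r (by omega))
  have hθpk : ∀ k : ℕ, θ ^ (p ^ k) = ζ ^ (k * c') * θ := by
    intro k
    induction k with
    | zero => simp
    | succ k ih =>
      have h1 : θ ^ (p ^ (k + 1)) = (θ ^ (p ^ k)) ^ p := by
        rw [← pow_mul, pow_succ]
      rw [h1, ih, mul_pow, ← pow_mul, hθp, ← mul_assoc, ← pow_add]
      congr 1
      apply hζmod
      have h2 : k * c' * p ≡ k * c' * 1 [MOD r] := (Nat.ModEq.refl (k * c')).mul hpr1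
      calc k * c' * p + c' ≡ k * c' * 1 + c' [MOD r] := h2.add_right c'
        _ = (k + 1) * c' := by ring
  haveI hrFact : Fact r.Prime := ⟨hr⟩
  haveI : NeZero r := ⟨by omega⟩
  have hfrob : ∀ i : Fin r, ∃ k : ℕ, (1 + θ) ^ (p ^ k) = 1 + ζ ^ (i : ℕ) * θ := by
    intro i
    have hc'0 : (c' : ZMod r) ≠ 0 :=
      fun h => hrc' ((ZMod.natCast_eq_zero_iff _ _).mp h)
    set k : ℕ := (((i : ℕ) : ZMod r) * (c' : ZMod r)⁻¹).val with hkdef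
    have hkc : k * c' ≡ (i : ℕ) [MOD r] := by
      apply (ZMod.natCast_eq_natCast_iff _ _ _).mp
      push_cast
      rw [hkdef, ZMod.natCast_val, ZMod.cast_id]
      rw [mul_assoc, inv_mul_cancel₀ hc'0, mul_one]
    refine ⟨k, ?_⟩
    have h1 : ((1 : AdjoinRoot f) + θ) ^ (p ^ k) = 1 ^ (p ^ k) + θ ^ (p ^ k) :=
      add_pow_char_pow 1 θ p k
    rw [h1, one_pow, hθpk k, hζmod _ _ hkc]
  choose χ hχ using hfrob
  -- pigeonhole modulo r^(α+1)
  set B : ℕ := Nat.sqrt r with hBdef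
  set rhat : ℕ := r ^ (α + 1) with hrhatdef
  have hrr : rhat = r ^ α * r := by rw [hrhatdef, pow_succ]
  have hrhatpos : 0 < rhat := by positivity
  set T : Finset (ZMod rhat) :=
    (Finset.range r).image (fun k => ((1 + r ^ α * k : ℕ) : ZMod rhat)) with hTdef
  have hTcard : T.card ≤ r := le_trans Finset.card_image_le (le_of_eq (Finset.card_range r))
  have hmemT : ∀ m : ℕ, m ≡ 1 [MOD r ^ α] → ((m : ZMod rhat) ∈ T) := by
    intro m hm
    set v := m % rhat with hvdef
    have h1 : m ≡ v [MOD rhat] := (Nat.mod_modEq m rhat).symm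
    have hv1 : v ≡ 1 [MOD r ^ α] :=
      ((h1.of_dvd (by rw [hrr]; exact Dvd.intro r rfl)).symm).trans hm
    have hvlt : v < rhat := Nat.mod_lt _ hrhatpos
    have hv0 : 1 ≤ v := by
      by_contra hc
      have hv00 : v = 0 := by omega
      rw [hv00] at hv1
      have : (0 : ℕ) % r ^ α = 1 % r ^ α := hv1
      rw [Nat.zero_mod, Nat.mod_eq_of_lt (by omega)] at this
      omega
    obtain ⟨k, hk⟩ := (Nat.modEq_iff_dvd' hv0).mp hv1.symm
    have hvk : v = r ^ α * k + 1 := by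
      have := (Nat.sub_eq_iff_eq_add hv0).mp hk
      omega
    have hklt : k < r := by
      by_contra hc
      push_neg at hc
      have h2 : r ^ α * r ≤ r ^ α * k := Nat.mul_le_mul_left _ hc
      omega
    apply Finset.mem_image.mpr
    refine ⟨k, Finset.mem_range.mpr hklt, ?_⟩
    refine (ZMod.natCast_eq_natCast_iff _ _ _).mpr ?_
    have hv2 : 1 + r ^ α * k = v := by rw [hvk, Nat.add_comm]
    rw [hv2]
    exact h1.symm
  set D : Finset (ℕ × ℕ) := Finset.range (B + 1) ×ˢ Finset.range (B + 1) with hDdef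
  have hDcard : T.card < D.card := by
    rw [hDdef, Finset.card_product, Finset.card_range]
    exact lt_of_le_of_lt hTcard (Nat.lt_succ_sqrt r)
  obtain ⟨ij1, hij1D, ij2, hij2D, hijne, hijeq⟩ :=
    Finset.exists_ne_map_eq_of_card_lt_of_maps_to hDcard
      (f := fun ij : ℕ × ℕ => ((n ^ ij.1 * p ^ (ij.2 + (B - ij.1)) : ℕ) : ZMod rhat))
      (fun ij _ => hmemT _ (hmod1 ij.1 (ij.2 + (B - ij.1))))
  obtain ⟨i1, j1⟩ := ij1
  obtain ⟨i2, j2⟩ := ij2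
  simp only [Finset.mem_product, Finset.mem_range, hDdef] at hij1D hij2D
  have hi1B : i1 ≤ B := by omega
  have hi2B : i2 ≤ B := by omega
  have hj1B : j1 ≤ B := by omega
  have hj2B : j2 ≤ B := by omega
  -- q and the key integers
  set q : ℕ := n / p with hqdef
  have hq : q * p = n := Nat.div_mul_cancel hpn
  have hq1 : 1 ≤ q := by
    rcases Nat.eq_zero_or_pos q with h0 | h0
    · rw [h0] at hq; omega
    · exact h0
  by_cases hqone : q = 1
  · have : n = p := by rw [← hq, hqone, one_mul]
    rw [this]; exact hp
  have hq2 : 2 ≤ q := by omega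
  set t1 : ℕ := q ^ i1 * p ^ j1 with ht1def
  set t2 : ℕ := q ^ i2 * p ^ j2 with ht2def
  have hkey : ∀ i j : ℕ, i ≤ B → n ^ i * p ^ (j + (B - i)) = (q ^ i * p ^ j) * p ^ B := by
    intro i j hiB
    rw [← hq, mul_pow, mul_assoc, ← pow_add,
      show i + (j + (B - i)) = j + B from by omega, pow_add, ← mul_assoc]
  have hm12 : n ^ i1 * p ^ (j1 + (B - i1)) ≡ n ^ i2 * p ^ (j2 + (B - i2)) [MOD rhat] :=
    (ZMod.natCast_eq_natCast_iff _ _ _).mp hijeq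
  have hθm : θ ^ (n ^ i1 * p ^ (j1 + (B - i1))) = θ ^ (n ^ i2 * p ^ (j2 + (B - i2))) :=
    pow_congr_of_pow_eq_one hθtop hm12
  have h1θm : (1 + θ) ^ (t1 * p ^ B) = (1 + θ) ^ (t2 * p ^ B) := by
    rw [← hkey i1 j1 hi1B, ← hkey i2 j2 hi2B]
    rw [hIntro _ (hIall i1 (j1 + (B - i1))), hIntro _ (hIall i2 (j2 + (B - i2)))]
    rw [hθm]
  have hfrobinj : ∀ x y : AdjoinRoot f, x ^ (p ^ B) = y ^ (p ^ B) → x = y := by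
    intro x y hxy
    have h1 : (x - y) ^ (p ^ B) = 0 := by
      rw [sub_pow_char_pow, hxy, sub_self]
    exact sub_eq_zero.mp ((pow_eq_zero_iff (by positivity)).mp h1)
  have ht12 : (1 + θ) ^ t1 = (1 + θ) ^ t2 := by
    apply hfrobinj
    rw [← pow_mul, ← pow_mul]
    exact h1θm
  -- t1 ≠ t2 by unique factorization / not a perfect power
  have hcase : ∀ iA jA iB jB : ℕ, iA < iB → q ^ iA * p ^ jA = q ^ iB * p ^ jB → False := by
    intro iA jA iB jB hlt heq2
    have h1 : q ^ iA * p ^ jA = q ^ iA * (q ^ (iB - iA) * p ^ jB) := by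
      rw [heq2, ← mul_assoc, ← pow_add]
      congr 2
      omega
    have h2 : p ^ jA = q ^ (iB - iA) * p ^ jB :=
      Nat.eq_of_mul_eq_mul_left (by positivity) h1
    have h3 : q ∣ p ^ jA := dvd_trans (dvd_pow_self q (by omega)) ⟨p ^ jB, h2⟩
    obtain ⟨m, hmle, hqm⟩ := (Nat.dvd_prime_pow hp).mp h3
    have hm1 : 1 ≤ m := by
      rcases Nat.eq_zero_or_pos m with h0 | h0
      · rw [h0, pow_zero] at hqm; omega
      · exact h0
    exact hpow ⟨p, m + 1, by omega, by rw [← hq, hqm, pow_succ]⟩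
  have ht1ne : t1 ≠ t2 := by
    intro hteq
    rcases Nat.lt_trichotomy i1 i2 with h | h | h
    · exact hcase i1 j1 i2 j2 h hteq
    · have hj : p ^ j1 = p ^ j2 := by
        apply Nat.eq_of_mul_eq_mul_left (show 0 < q ^ i2 by positivity)
        calc q ^ i2 * p ^ j1 = t1 := by rw [ht1def, h]
          _ = t2 := hteq
          _ = q ^ i2 * p ^ j2 := ht2def
      have : j1 = j2 := Nat.pow_right_injective hp2 hj
      exact hijne (by rw [Prod.ext_iff]; exact ⟨h, this⟩)
    · exact hcase i2 j2 i1 j1 h hteq.symm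
  -- 1 + θ is nonzero
  have h1θ0 : (1 : AdjoinRoot f) + θ ≠ 0 := by
    intro h0
    have hθeq : θ = -1 := by
      have := eq_neg_of_add_eq_zero_right h0
      simpa using this
    have h2 : θ ^ 2 = 1 := by rw [hθeq]; ring
    have h3 : orderOf θ ∣ 2 := orderOf_dvd_of_pow_eq_one h2
    rw [hordθ] at h3
    have h4 : r ^ (α + 1) ≤ 2 := Nat.le_of_dvd (by norm_num) h3
    have h5 : r ^ 1 ≤ r ^ (α + 1) := Nat.pow_le_pow_right (by omega) (by omega)
    rw [pow_one] at h5
    have h6 : r ^ 2 ≤ r ^ (α + 1) := Nat.pow_le_pow_right (by omega) (by omega)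
    have h7 : 4 ≤ r ^ 2 := by
      rw [sq]
      calc 4 = 2 * 2 := rfl
        _ ≤ r * r := Nat.mul_le_mul hr2 hr2
    omega
  -- preparation for counting: products of conjugates
  have hζ00 : ζ0 ≠ 0 := by
    intro h0
    have : ζ0 ^ r = 1 := by
      rw [hζ0def, ← pow_mul, hepow, hb1]
    rw [h0, zero_pow (by omega)] at this
    exact zero_ne_one this
  have haev : ∀ S : Finset (Fin r),
      (Polynomial.aeval θ) (∏ i ∈ S, (1 + C (ζ0 ^ (i : ℕ)) * X)) =
        ∏ i ∈ S, (1 + ζ ^ (i : ℕ) * θ) := by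
    intro S
    rw [map_prod]
    apply Finset.prod_congr rfl
    intro i _
    rw [map_add, map_one, map_mul, Polynomial.aeval_C, Polynomial.aeval_X, hζdef, map_pow]
  have hΦ : ∀ S : Finset (Fin r),
      (∏ i ∈ S, (1 + ζ ^ (i : ℕ) * θ)) = (1 + θ) ^ (∑ i ∈ S, p ^ (χ i)) := by
    intro S
    rw [← Finset.prod_pow_eq_pow_sum]
    exact Finset.prod_congr rfl (fun i _ => (hχ i).symm)
  have hdegf : (f : (ZMod p)[X]).degree = (r : WithBot ℕ) := by
    rw [hfdef]
    exact Polynomial.degree_X_pow_sub_C (by omega) b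
  have hfac : ∀ i : Fin r, (1 + C (ζ0 ^ (i : ℕ)) * X : (ZMod p)[X]).degree = 1 := by
    intro i
    have h1 : (1 + C (ζ0 ^ (i : ℕ)) * X : (ZMod p)[X]) = C (ζ0 ^ (i : ℕ)) * X + C 1 := by
      rw [Polynomial.C_1, add_comm]
    rw [h1]
    exact Polynomial.degree_linear (pow_ne_zero _ hζ00)
  have hdegP : ∀ S : Finset (Fin r), S ≠ Finset.univ →
      (∏ i ∈ S, (1 + C (ζ0 ^ (i : ℕ)) * X) : (ZMod p)[X]).degree < (r : WithBot ℕ) := by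
    intro S hSu
    rw [Polynomial.degree_prod]
    have h1 : ∑ i ∈ S, (1 + C (ζ0 ^ (i : ℕ)) * X : (ZMod p)[X]).degree
        = (S.card : WithBot ℕ) := by
      rw [Finset.sum_congr rfl (fun i _ => hfac i), Finset.sum_const, nsmul_eq_mul, mul_one]
    rw [h1]
    have h2 : S.card < r := by
      have := (Finset.card_lt_iff_ne_univ S).mpr hSu
      simpa using this
    exact_mod_cast h2
  -- main counting argument
  have htle : ∀ i j : ℕ, i ≤ B → j ≤ B → q ^ i * p ^ j ≤ n ^ B := by
    intro i j hi hj
    calc q ^ i * p ^ j ≤ q ^ B * p ^ B :=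
          Nat.mul_le_mul (Nat.pow_le_pow_right (by omega) hi) (Nat.pow_le_pow_right (by omega) hj)
      _ = n ^ B := by rw [← mul_pow, hq]
  have hmain : ∀ tA tB : ℕ, tB < tA → tA ≤ n ^ B → 1 ≤ tB →
      (1 + θ) ^ tA = (1 + θ) ^ tB → False := by
    intro tA tB hlt htA htB hteq
    have hd1 : (1 + θ) ^ tB * (1 + θ) ^ (tA - tB) = (1 + θ) ^ tB * 1 := by
      rw [mul_one, ← pow_add, show tB + (tA - tB) = tA from by omega, hteq]
    have hd2 : (1 + θ) ^ (tA - tB) = 1 := mul_left_cancel₀ (pow_ne_zero _ h1θ0) hd1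
    have hfin : IsOfFinOrder (1 + θ) :=
      isOfFinOrder_iff_pow_eq_one.mpr ⟨tA - tB, by omega, hd2⟩
    set d := orderOf (1 + θ) with hddef
    have hdpos : 0 < d := orderOf_pos_iff.mpr hfin
    have hddvd : d ∣ tA - tB := orderOf_dvd_of_pow_eq_one hd2
    have hdle : d ≤ n ^ B - 1 := by
      have := Nat.le_of_dvd (by omega) hddvd
      omega
    -- injectivity of S ↦ (∑ p^(χ i)) % d on proper subsets
    set A : Finset (Finset (Fin r)) := Finset.univ.erase Finset.univ with hAdef
    have hAcard : A.card = 2 ^ r - 1 := by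
      rw [hAdef, Finset.card_erase_of_mem (Finset.mem_univ _), Finset.card_univ,
        Fintype.card_finset, Fintype.card_fin]
    have hinj : Set.InjOn (fun S : Finset (Fin r) => (∑ i ∈ S, p ^ (χ i)) % d) A := by
      intro S hS S' hS' hSS
      have hSu : S ≠ Finset.univ := (Finset.mem_erase.mp hS).1
      have hS'u : S' ≠ Finset.univ := (Finset.mem_erase.mp hS').1
      have h1 : (1 + θ) ^ (∑ i ∈ S, p ^ (χ i)) = (1 + θ) ^ (∑ i ∈ S', p ^ (χ i)) :=
        pow_congr_of_pow_eq_one (pow_orderOf_eq_one _) hSS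
      rw [← hΦ, ← hΦ, ← haev, ← haev, hθdef, AdjoinRoot.aeval_eq, AdjoinRoot.aeval_eq] at h1
      have h2 := AdjoinRoot.mk_eq_mk.mp h1
      have h3 : ((∏ i ∈ S, (1 + C (ζ0 ^ (i : ℕ)) * X))
          - (∏ i ∈ S', (1 + C (ζ0 ^ (i : ℕ)) * X)) : (ZMod p)[X]) = 0 := by
        apply Polynomial.eq_zero_of_dvd_of_degree_lt h2
        rw [hdegf]
        exact lt_of_le_of_lt (Polynomial.degree_sub_le _ _)
          (max_lt (hdegP S hSu) (hdegP S' hS'u))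
      exact prod_linear_inj hordζ0 (by omega) (sub_eq_zero.mp h3)
    have hcount : 2 ^ r - 1 ≤ d := by
      have h1 : A.card ≤ (Finset.range d).card :=
        Finset.card_le_card_of_injOn _
          (fun S _ => Finset.mem_range.mpr (Nat.mod_lt _ hdpos)) hinj
      rw [hAcard, Finset.card_range] at h1
      exact h1
    have hnum : n ^ B < 2 ^ r := aux_num (by omega) hr hrbig
    omega
  -- conclude
  exfalso
  have ht1pos : 0 < t1 := by positivity
  have ht2pos : 0 < t2 := by positivity
  rcases Nat.lt_trichotomy t1 t2 with h | h | h
  · exact hmain t2 t1 h (htle i2 j2 hi2B hj2B) ht1pos ht12.symm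
  · exact ht1ne h
  · exact hmain t1 t2 h (htle i1 j1 hi1B hj1B) ht2pos ht12
end

section
/- Berrizbeitia's criterion: let n ≡ 1 (mod 4), s = ⌈2 log₂ log₂ n⌉, and suppose 2^k || n-1 with k ≥ s. If there exists an integer a with Jacobi symbol (a/n) = -1 and a^((n-1)/2) ≡ -1 (mod n), and (1 + x)^n ≡ 1 + x^n in (ℤ/nℤ)[x]/(x^{2^s} - a), then n is a power of a prime. -/
open Polynomial IntermediateField



private lemma sq_one_add (j u : ℕ) (hj : 1 ≤ j) :
    (1 + 2^j*u)^2 = 1 + 2^(j+1)*(u + 2^(j-1)*u^2) := by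
  have h : 2^(j+1) * 2^(j-1) = 2^j * 2^j := by
    rw [← pow_add, ← pow_add]; congr 1; omega
  have e2 : (2:ℕ)^(j+1) = 2^j*2 := by rw [pow_succ]
  calc (1 + 2^j*u)^2 = 1 + (2^j*2) * u + (2^j*2^j)*u^2 := by ring
    _ = 1 + 2^(j+1)*(u + 2^(j-1)*u^2) := by rw [← h, ← e2]; ring

private lemma odd_parts (j u : ℕ) (hj : 2 ≤ j) (hu : Odd u) : Odd (u + 2^(j-1)*u^2) := by
  have he : Even ((2:ℕ)^(j-1)) := (Nat.even_pow).mpr ⟨even_iff_two_dvd.mpr dvd_rfl, by omega⟩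
  exact hu.add_even (he.mul_right _)

private lemma odd_pow_aux (j u : ℕ) (hj : 1 ≤ j) :
    ∀ l : ℕ, ∃ V, (Odd u → Odd V) ∧ (1 + 2^j*u)^(2*l+1) = 1 + 2^j*V := by
  intro l
  induction l with
  | zero => exact ⟨u, fun h => h, by norm_num⟩
  | succ l ih =>
    obtain ⟨V, hVo, hV⟩ := ih
    set u' := u + 2^(j-1)*u^2 with hu'
    refine ⟨V + 2*(u' + 2^j*(V*u')), fun hu => (hVo hu).add_even (even_two.mul_right _), ?_⟩
    have hexp : 2*(l+1)+1 = (2*l+1) + 2 := by omega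
    rw [hexp, pow_add, hV, sq_one_add j u hj, ← hu']
    rw [pow_succ]
    ring

private lemma pow_two_pow_c {p k w : ℕ} (hk : 2 ≤ k) (hw : Odd w) (hp : p = 1 + 2^k*w) :
    ∀ c, ∃ v, Odd v ∧ p^(2^c) = 1 + 2^(k+c)*v := by
  intro c
  induction c with
  | zero => exact ⟨w, hw, by simpa using hp⟩
  | succ c ih =>
    obtain ⟨v, hvo, hv⟩ := ih
    refine ⟨v + 2^(k+c-1)*v^2, odd_parts _ _ (by omega) hvo, ?_⟩
    have h1 : p^(2^(c+1)) = (p^(2^c))^2 := by rw [← pow_mul, pow_succ]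
    rw [h1, hv, sq_one_add _ _ (by omega)]
    rw [show k + c + 1 = k + (c+1) by omega]

private lemma pow_val {p k w d s : ℕ} (hk : 2 ≤ k) (hw : Odd w) (hp : p = 1 + 2^k*w)
    (hd : d ≠ 0) (hnd : ¬ 2^s ∣ d) :
    ∃ c V, c < s ∧ Odd V ∧ p^d = 1 + 2^(k+c)*V := by
  set c := d.factorization 2 with hc
  have hc1 : 2^c ∣ d := Nat.ordProj_dvd d 2
  have hm : ¬ 2 ∣ d / 2^c := Nat.not_dvd_ordCompl Nat.prime_two hd
  have hcs : c < s := by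
    by_contra h
    exact hnd (dvd_trans (pow_dvd_pow 2 (by omega)) hc1)
  obtain ⟨m, hm'⟩ := hc1
  have hdm : d / 2^c = m := by rw [hm']; exact Nat.mul_div_cancel_left m (Nat.pow_pos (n := c) two_pos)
  rw [hdm] at hm
  have hmodd : Odd m := Nat.odd_iff.mpr (by omega)
  obtain ⟨v, hvo, hv⟩ := pow_two_pow_c hk hw hp c
  obtain ⟨l, hl⟩ := hmodd
  obtain ⟨V, hVo, hV⟩ := odd_pow_aux (k+c) v (by omega) l
  refine ⟨c, V, hcs, hVo hvo, ?_⟩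
  rw [hm', pow_mul, hv, hl]
  exact hV

private lemma list_legendre {a : ℤ} : ∀ (l : List ℕ) (hl : ∀ p ∈ l, p.Prime),
    (l.pmap (fun p pp => @legendreSym p ⟨pp⟩ a) hl).prod = -1 →
    ∃ (p : ℕ) (hp : p.Prime), p ∈ l ∧ @legendreSym p ⟨hp⟩ a = -1 := by
  intro l
  induction l with
  | nil => intro _ h; simp at h
  | cons p t ih =>
    intro hl h
    simp only [List.pmap, List.prod_cons] at h
    have hp : p.Prime := hl p (List.mem_cons_self)
    haveI : Fact p.Prime := ⟨hp⟩
    by_cases h0 : ((a : ZMod p) = 0)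
    · rw [(legendreSym.eq_zero_iff p a).mpr h0, zero_mul] at h
      norm_num at h
    · rcases legendreSym.eq_one_or_neg_one p h0 with h1 | h1
      · rw [h1, one_mul] at h
        obtain ⟨q, hq, hmem, hval⟩ := ih _ h
        exact ⟨q, hq, List.mem_cons_of_mem _ hmem, hval⟩
      · exact ⟨p, hp, List.mem_cons_self, h1⟩

private lemma exists_prime_legendre {a : ℤ} {n : ℕ} (h : jacobiSym a n = -1) :
    ∃ (p : ℕ) (hp : p.Prime), p ∣ n ∧ @legendreSym p ⟨hp⟩ a = -1 := by
  unfold jacobiSym at h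
  obtain ⟨p, hp, hmem, hval⟩ := list_legendre _ _ h
  exact ⟨p, hp, Nat.dvd_of_mem_primeFactorsList hmem, hval⟩

private lemma analytic (n s M : ℕ) (hn5 : 5 ≤ n) (hn4 : n % 4 = 1)
    (hs : s = ⌈2 * Real.logb 2 (Real.logb 2 n)⌉₊) (hM : M = Nat.sqrt (2^s)) (hs3 : 3 ≤ s) :
    n ^ M < 2 ^ 2^s := by
  have hn0 : (0:ℝ) < n := by positivity
  have hL4 : (2:ℝ) < Real.logb 2 n := by
    have h4 : Real.logb 2 4 = 2 := by
      rw [show (4:ℝ) = 2^(2:ℕ) by norm_num, Real.logb_pow, Real.logb_self_eq_one (by norm_num)]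
      norm_num
    have h45 : (4:ℝ) < (n:ℝ) := by exact_mod_cast (by omega : (4:ℕ) < n)
    have := Real.logb_lt_logb one_lt_two (by norm_num : (0:ℝ) < 4) h45
    linarith
  set L : ℝ := Real.logb 2 n with hLdef
  have hL0 : 0 < L := by linarith
  have hceil : 2 * Real.logb 2 L ≤ (s:ℝ) := by rw [hs]; exact Nat.le_ceil _
  set A : ℝ := (2:ℝ) ^ ((s:ℝ)/2) with hA
  have hA0 : 0 < A := Real.rpow_pos_of_pos (by norm_num) _
  have hLA : L ≤ A := by
    have h1 : Real.logb 2 L ≤ (s:ℝ)/2 := by linarith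
    exact (Real.logb_le_iff_le_rpow (by norm_num) hL0).mp h1
  have hAA : A * A = (2:ℝ)^(s:ℝ) := by
    rw [hA, ← Real.rpow_add (by norm_num)]
    congr 1
    ring
  have h2s : ((2^s : ℕ):ℝ) = (2:ℝ)^(s:ℝ) := by
    rw [Nat.cast_pow, Nat.cast_ofNat, ← Real.rpow_natCast]
  have hMA : (M:ℝ) ≤ A := by
    have h1 : (M:ℝ) * M ≤ (2:ℝ)^(s:ℝ) := by
      rw [← h2s]
      exact_mod_cast (hM ▸ Nat.sqrt_le (2^s))
    nlinarith
  have key : (M:ℝ) * L < (2:ℝ)^(s:ℝ) := by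
    rcases lt_or_eq_of_le (hM ▸ Nat.sqrt_le (2^s) : M * M ≤ 2^s) with hlt | heq
    · have hMA' : (M:ℝ) < A := by
        have h1 : (M:ℝ) * M < (2:ℝ)^(s:ℝ) := by
          rw [← h2s]; exact_mod_cast hlt
        nlinarith
      nlinarith
    · -- M * M = 2^s
      have hMM : (M:ℝ) * M = (2:ℝ)^(s:ℝ) := by rw [← h2s]; exact_mod_cast heq
      have hAM : A = M := by nlinarith
      rcases lt_or_ge L (M:ℝ) with h | h
      · have hM0 : (0:ℝ) < M := by
          have : 8 ≤ 2^s := by calc (8:ℕ) = 2^3 := by norm_num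
                                   _ ≤ 2^s := Nat.pow_le_pow_right (by norm_num) hs3
          have : 3 ≤ M := by
            by_contra hc
            push_neg at hc
            interval_cases M <;> omega
          exact_mod_cast (by omega : 0 < M)
        nlinarith
      · exfalso
        have hLM : L = (M:ℝ) := le_antisymm (hAM ▸ hLA) h
        have hn2M : (n:ℝ) = (2:ℝ)^(M:ℕ) := by
          rw [← Real.rpow_natCast 2 M, ← hLM, hLdef, Real.rpow_logb (by norm_num) (by norm_num) hn0]
        have hnM : n = 2^M := by exact_mod_cast hn2M
        have hM3 : 3 ≤ M := by
          by_contra hc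
          push_neg at hc
          interval_cases M <;> omega
        have : 4 ∣ n := by
          rw [hnM]
          exact dvd_trans (by norm_num) (pow_dvd_pow 2 (by omega : 2 ≤ M))
        omega
  -- conclude
  have hfin : ((n^M : ℕ):ℝ) < ((2^(2^s) : ℕ):ℝ) := by
    have h1 : ((n^M : ℕ):ℝ) = (2:ℝ)^(L * M) := by
      push_cast
      rw [← Real.rpow_logb (b := 2) (x := (n:ℝ)) two_pos (by norm_num) hn0, ← hLdef,
        ← Real.rpow_natCast ((2:ℝ)^L) M, ← Real.rpow_mul (by norm_num)]
    have h2 : ((2^(2^s) : ℕ):ℝ) = (2:ℝ)^((2^s : ℕ):ℝ) := by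
      rw [Nat.cast_pow, Nat.cast_ofNat, ← Real.rpow_natCast]
    rw [h1, h2, h2s]
    exact (Real.rpow_lt_rpow_left_iff (by norm_num)).mpr (by rw [mul_comm]; exact key)
  exact_mod_cast hfin

set_option maxHeartbeats 1000000 in
theorem berrizbeitia_criterion (n s k : ℕ) (a : ℤ)
    (hn4 : n ≡ 1 [MOD 4])
    (hs : s = ⌈2 * Real.logb 2 (Real.logb 2 n)⌉₊)
    (hdvd : 2 ^ k ∣ n - 1) (hndvd : ¬ 2 ^ (k + 1) ∣ n - 1) (hk : s ≤ k)
    (hjac : jacobiSym a n = -1)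
    (hpow : a ^ ((n - 1) / 2) ≡ -1 [ZMOD n])
    (hpoly : (1 + AdjoinRoot.root (X ^ (2 ^ s) - C (a : ZMod n))) ^ n =
      1 + (AdjoinRoot.root (X ^ (2 ^ s) - C (a : ZMod n))) ^ n) :
    ∃ p l : ℕ, p.Prime ∧ n = p ^ l := by
  by_contra hcon
  -- basic facts about n
  have hn4' : n % 4 = 1 := by
    have := hn4; simpa [Nat.ModEq] using this
  have hn1 : n ≠ 1 := by
    rintro rfl; rw [jacobiSym.one_right] at hjac; norm_num at hjac
  have hn5 : 5 ≤ n := by omega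
  have hnodd : n % 2 = 1 := by omega
  -- s ≥ 3
  have hL4 : (2:ℝ) < Real.logb 2 n := by
    have h4 : Real.logb 2 4 = 2 := by
      rw [show (4:ℝ) = 2^(2:ℕ) by norm_num, Real.logb_pow, Real.logb_self_eq_one (by norm_num)]
      norm_num
    have h45 : (4:ℝ) < (n:ℝ) := by exact_mod_cast (by omega : (4:ℕ) < n)
    have := Real.logb_lt_logb one_lt_two (by norm_num : (0:ℝ) < 4) h45
    linarith
  have hs3 : 3 ≤ s := by
    have h1 : (1:ℝ) < Real.logb 2 (Real.logb 2 n) := by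
      have h2 : Real.logb 2 2 = 1 := Real.logb_self_eq_one (by norm_num)
      have := Real.logb_lt_logb one_lt_two (by norm_num : (0:ℝ) < 2) hL4
      linarith
    have h2 : (2:ℝ) < 2 * Real.logb 2 (Real.logb 2 n) := by linarith
    have h3 : 2 < s := by
      rw [hs]; exact Nat.lt_ceil.mpr (by exact_mod_cast h2)
    omega
  have hks : 3 ≤ k := le_trans hs3 hk
  -- u : odd part of n - 1
  obtain ⟨u, hu⟩ := hdvd
  have hueq : n = 1 + 2^k * u := by omega
  have huodd : Odd u := by
    rcases Nat.even_or_odd u with he | ho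
    · exfalso
      obtain ⟨u', rfl⟩ := he
      exact hndvd ⟨u', by rw [hu, pow_succ]; ring⟩
    · exact ho
  have hu1 : 1 ≤ u := by
    rcases Nat.eq_zero_or_pos u with h|h
    · exfalso; rw [h] at hu; omega
    · exact h
  -- the prime p
  obtain ⟨p, hp, hpn, hleg⟩ := exists_prime_legendre hjac
  haveI hpfact : Fact p.Prime := ⟨hp⟩
  have hp2 : p ≠ 2 := by
    rintro rfl
    obtain ⟨t, rfl⟩ := hpn
    omega
  have hp3 : 3 ≤ p := by have := hp.two_le; omega
  have hpodd : p % 2 = 1 := Nat.odd_iff.mp (hp.odd_of_ne_two hp2)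
  -- facts about ā in ZMod p
  have hnsq : ¬ IsSquare ((a : ZMod p)) := (legendreSym.eq_neg_one_iff p).mp hleg
  have haz : (a : ZMod p) ≠ 0 := by
    intro h; exact hnsq (by rw [h]; exact ⟨0, (mul_zero 0).symm⟩)
  have hkk : (2:ℕ)^k = 2^(k-1)*2 := by
    rw [← pow_succ]; congr 1; omega
  have hneg1 : (-1 : ZMod p) ≠ 1 := by
    intro h
    have h2 : ((2:ℕ) : ZMod p) = 0 := by
      push_cast
      linear_combination -h
    have := (ZMod.natCast_eq_zero_iff 2 p).mp h2
    have := Nat.le_of_dvd (by norm_num) this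
    omega
  have ha1 : (a : ZMod p) ^ (2^(k-1)*u) = -1 := by
    have h2 : (n-1)/2 = 2^(k-1)*u := by
      rw [hu, hkk, show 2^(k-1)*2*u = 2*(2^(k-1)*u) by ring]
      exact Nat.mul_div_cancel_left _ two_pos
    have hmod : ((a ^ ((n-1)/2) : ℤ) : ZMod p) = ((-1 : ℤ) : ZMod p) := by
      rw [ZMod.intCast_eq_intCast_iff]
      exact hpow.of_dvd (Int.natCast_dvd_natCast.mpr hpn)
    push_cast at hmod
    rw [h2] at hmod
    exact hmod
  have ha2 : (a : ZMod p) ^ (2^k * u) = 1 := by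
    rw [show 2^k*u = (2^(k-1)*u)*2 by rw [hkk]; ring, pow_mul, ha1]
    norm_num
  have hap : (a : ZMod p) ^ (p / 2) = -1 := by
    have := legendreSym.eq_pow p a
    rw [hleg] at this
    push_cast at this
    exact this.symm
  have ha4 : (a : ZMod p) ^ (p - 1) = 1 := ZMod.pow_card_sub_one_eq_one haz
  have hp2eq : p / 2 = (p-1)/2 := by omega
  -- Claim 2 : ¬ 2^(k+1) ∣ p - 1
  have hC2 : ¬ 2^(k+1) ∣ (p-1) := by
    rintro ⟨y, hy⟩
    have hy2 : p - 1 = 2*(2^k*y) := by rw [hy, pow_succ]; ring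
    have hhalf : p / 2 = 2^k * y := by
      rw [hp2eq, hy2, Nat.mul_div_cancel_left _ two_pos]
    have h1 : (a : ZMod p) ^ (2^k * y * u) = -1 := by
      rw [pow_mul, ← hhalf, hap, Odd.neg_one_pow huodd]
    have h2 : (a : ZMod p) ^ (2^k * y * u) = 1 := by
      rw [show 2^k*y*u = (2^k*u)*y by ring, pow_mul, ha2, one_pow]
    rw [h1] at h2
    exact hneg1 h2
  -- Claim 1 : 2^k ∣ p - 1
  have hC1 : 2^k ∣ (p-1) := by
    by_contra hnk
    have hp1pos : p - 1 ≠ 0 := by omega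
    set κ := (p-1).factorization 2 with hκ
    have hκd : 2^κ ∣ p - 1 := Nat.ordProj_dvd _ 2
    have hκk : κ < k := by
      by_contra hge
      exact hnk (dvd_trans (pow_dvd_pow 2 (by omega)) hκd)
    have hκ1 : 1 ≤ κ :=
      Nat.Prime.factorization_pos_of_dvd Nat.prime_two hp1pos (by omega)
    obtain ⟨w0, hw0⟩ := hκd
    have hw0odd : Odd w0 := by
      have h1 : ¬ 2 ∣ (p-1) / 2^κ := Nat.not_dvd_ordCompl Nat.prime_two hp1pos
      have h2 : (p-1)/2^κ = w0 := by
        rw [hw0]; exact Nat.mul_div_cancel_left _ (Nat.pow_pos (n := κ) two_pos)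
      rw [h2] at h1
      exact Nat.odd_iff.mpr (by omega)
    have hhalf : p/2 = 2^(κ-1)*w0 := by
      have hκκ : (2:ℕ)^κ = 2^(κ-1)*2 := by
        rw [← pow_succ]; congr 1; omega
      have h2 : p - 1 = 2*(2^(κ-1)*w0) := by
        rw [hw0, hκκ]; ring
      rw [hp2eq, h2, Nat.mul_div_cancel_left _ two_pos]
    have h1 : (a : ZMod p) ^ (2^(k-1)*u*w0) = -1 := by
      rw [pow_mul, ha1, Odd.neg_one_pow hw0odd]
    have h2 : (a : ZMod p) ^ (2^(k-1)*u*w0) = 1 := by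
      have hee : 2^(k-1)*u*w0 = (2^(κ-1)*w0) * (2^(k-κ)*u) := by
        rw [show (2:ℕ)^(k-1) = 2^(κ-1)*2^(k-κ) by rw [← pow_add]; congr 1; omega]
        ring
      rw [hee, pow_mul, ← hhalf, hap]
      refine Even.neg_one_pow ?_
      have : Even ((2:ℕ)^(k-κ)) := (Nat.even_pow).mpr ⟨even_iff_two_dvd.mpr dvd_rfl, by omega⟩
      exact this.mul_right _
    rw [h1] at h2
    exact hneg1 h2
  obtain ⟨w, hw⟩ := hC1
  have hwodd : Odd w := by
    rcases Nat.even_or_odd w with he | ho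
    · exfalso
      obtain ⟨w', rfl⟩ := he
      exact hC2 ⟨w', by rw [hw, pow_succ]; ring⟩
    · exact ho
  have hpeq : p = 1 + 2^k*w := by omega
  have hw1 : 1 ≤ w := by
    rcases Nat.eq_zero_or_pos w with h|h
    · exfalso; rw [h] at hw; omega
    · exact h
  have hphalf : p/2 = 2^(k-1)*w := by
    have h2 : p - 1 = 2*(2^(k-1)*w) := by
      rw [hw, hkk]; ring
    rw [hp2eq, h2, Nat.mul_div_cancel_left _ two_pos]
  -- the splitting field
  set K := ZMod p with hK
  set f : K[X] := X^(2^s) - C ((a : ZMod p)) with hf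
  have hfmonic : f.Monic := monic_X_pow_sub_C _ (by positivity)
  have hfdeg : f.degree ≠ 0 := by
    rw [hf, degree_X_pow_sub_C (by positivity)]
    exact_mod_cast (by positivity : (2^s:ℕ) ≠ 0)
  set L := f.SplittingField with hL
  obtain ⟨ζ, hζroot⟩ := (Polynomial.SplittingField.splits f).exists_eval_eq_zero (by rwa [degree_map])
  rw [eval_map] at hζroot
  have hζs : ζ ^ (2^s) = algebraMap K L ((a : ZMod p)) := by
    have h2 : eval₂ (algebraMap K L) ζ (X^(2^s) - C ((a : ZMod p))) = 0 := hζroot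
    rw [eval₂_sub, eval₂_pow, eval₂_X, eval₂_C, sub_eq_zero] at h2
    exact h2
  have hinj : Function.Injective (algebraMap K L) := (algebraMap K L).injective
  haveI : CharP L p := charP_of_injective_algebraMap hinj p
  set aL := algebraMap K L ((a : ZMod p)) with haL
  have haL1 : aL ^ (2^(k-1)*u) = -1 := by rw [haL, ← map_pow, ha1, map_neg, map_one]
  have haL0 : aL ≠ 0 := by
    intro h
    apply haz
    apply hinj
    rw [map_zero]
    exact h
  have hLneg1 : (-1 : L) ≠ 1 := by
    intro h
    apply hneg1
    apply hinj
    rw [map_neg, map_one, h]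
  have hζ0 : ζ ≠ 0 := by
    intro h
    rw [h, zero_pow (by positivity : (2:ℕ)^s ≠ 0)] at hζs
    exact haL0 hζs.symm
  -- the minimal polynomial of ζ has degree 2^s
  have hint : IsIntegral K ζ := ⟨f, hfmonic, hζroot⟩
  have hd1 : 0 < (minpoly K ζ).natDegree := minpoly.natDegree_pos hint
  have hdle : (minpoly K ζ).natDegree ≤ 2^s := by
    have h1 := Polynomial.natDegree_le_of_dvd
      (minpoly.dvd K ζ (by rwa [aeval_def])) hfmonic.ne_zero
    have hfnd : f.natDegree = 2^s := by rw [hf, natDegree_X_pow_sub_C]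
    rwa [hfnd] at h1
  have hzeta_pow : ζ ^ (p^((minpoly K ζ).natDegree) - 1) = 1 := by
    haveI := IntermediateField.adjoin.finiteDimensional hint
    haveI : Finite ↥K⟮ζ⟯ := Module.finite_of_finite K
    haveI : Fintype ↥K⟮ζ⟯ := Fintype.ofFinite _
    set ζ' := IntermediateField.AdjoinSimple.gen K ζ with hζ'
    have hζ'0 : ζ' ≠ 0 := by
      intro h
      apply hζ0
      have := congrArg (algebraMap (↥K⟮ζ⟯) L) h
      rwa [IntermediateField.AdjoinSimple.algebraMap_gen, map_zero] at this
    have hcard : Fintype.card ↥K⟮ζ⟯ = p^((minpoly K ζ).natDegree) := by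
      rw [Module.card_eq_pow_finrank (K := K), ZMod.card, IntermediateField.adjoin.finrank hint]
    have h3 := FiniteField.pow_card_sub_one_eq_one ζ' hζ'0
    rw [hcard] at h3
    have h4 := congrArg (algebraMap (↥K⟮ζ⟯) L) h3
    rwa [map_pow, IntermediateField.AdjoinSimple.algebraMap_gen, map_one] at h4
  have hsd : 2^s ∣ (minpoly K ζ).natDegree := by
    by_contra hnd
    obtain ⟨c, V, hcs, hVodd, hpd⟩ := pow_val (p := p) (by omega : 2 ≤ k) hwodd hpeq
      (by omega : (minpoly K ζ).natDegree ≠ 0) hnd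
    have h1 : ζ ^ (2^(k+c)*V) = 1 := by
      rw [← hzeta_pow]
      congr 1
      rw [hpd]
      exact (Nat.add_sub_cancel_left 1 _).symm
    have h2 : (a : ZMod p) ^ (2^(k+c-s)*V) = 1 := by
      apply hinj
      rw [map_pow, map_one, ← haL, ← hζs, ← pow_mul]
      rw [show 2^s * (2^(k+c-s)*V) = 2^(k+c)*V by
        rw [← mul_assoc, ← pow_add]; congr 2; omega]
      exact h1
    have h3 : (a : ZMod p) ^ (2^(k-1)*u*V) = 1 := by
      have hE : 2^(k-1)*u*V = (2^(k+c-s)*V)*(2^(s-1-c)*u) := by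
        rw [show (2:ℕ)^(k-1) = 2^(k+c-s)*2^(s-1-c) by rw [← pow_add]; congr 1; omega]
        ring
      rw [hE, pow_mul, h2, one_pow]
    have h4 : (a : ZMod p) ^ (2^(k-1)*u*V) = -1 := by
      rw [pow_mul, ha1, Odd.neg_one_pow hVodd]
    rw [h3] at h4
    exact hneg1 h4.symm
  have hdeq : (minpoly K ζ).natDegree = 2^s := le_antisymm hdle (Nat.le_of_dvd hd1 hsd)
  have keyV : ∀ P : K[X], P.natDegree < 2^s → (Polynomial.aeval ζ) P = 0 → P = 0 := by
    intro P hdeg h0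
    by_contra hne
    have := Polynomial.natDegree_le_of_dvd (minpoly.dvd K ζ h0) hne
    rw [hdeq] at this
    omega
  -- roots of unity in K
  have hωps : ((a : ZMod p) ^ (2^(k-s)*w)) ^ (2^s) = 1 := by
    rw [← pow_mul, show 2^(k-s)*w*2^s = 2^k*w by
      rw [show (2:ℕ)^(k-s)*w*2^s = (2^(k-s)*2^s)*w by ring, ← pow_add]
      congr 2
      omega, ← hw]
    exact ha4
  have hωph : ((a : ZMod p) ^ (2^(k-s)*w)) ^ (2^(s-1)) = -1 := by
    rw [← pow_mul, show 2^(k-s)*w*2^(s-1) = 2^(k-1)*w by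
      rw [show (2:ℕ)^(k-s)*w*2^(s-1) = (2^(k-s)*2^(s-1))*w by ring, ← pow_add]
      congr 2
      omega, ← hphalf]
    exact hap
  have hωp0 : ((a : ZMod p) ^ (2^(k-s)*w)) ≠ 0 := by
    intro h
    rw [h, zero_pow (by positivity : (2:ℕ)^s ≠ 0)] at hωps
    exact zero_ne_one hωps
  have hordωp : orderOf ((a : ZMod p) ^ (2^(k-s)*w)) = 2^s := by
    have h1 : ¬ ((a : ZMod p) ^ (2^(k-s)*w)) ^ (2^(s-1)) = 1 := by
      rw [hωph]; exact hneg1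
    have h2 : ((a : ZMod p) ^ (2^(k-s)*w)) ^ (2^((s-1)+1)) = 1 := by
      rw [show (s-1)+1 = s by omega]; exact hωps
    have := orderOf_eq_prime_pow h1 h2
    rwa [show (s-1)+1 = s by omega] at this
  have hωns : ((a : ZMod p) ^ (2^(k-s)*u)) ^ (2^s) = 1 := by
    rw [← pow_mul, show 2^(k-s)*u*2^s = 2^k*u by
      rw [show (2:ℕ)^(k-s)*u*2^s = (2^(k-s)*2^s)*u by ring, ← pow_add]
      congr 2
      omega]
    exact ha2
  -- ωn is a power of ωp
  have he0 : ∃ e0, ((a : ZMod p) ^ (2^(k-s)*u)) = ((a : ZMod p) ^ (2^(k-s)*w)) ^ e0 := by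
    classical
    by_contra hne
    push_neg at hne
    set R := (Polynomial.nthRoots (2^s) (1:K)).toFinset with hR
    set img := Finset.image (fun i => ((a : ZMod p) ^ (2^(k-s)*w)) ^ i) (Finset.range (2^s))
      with himg
    have hsub : img ⊆ R := by
      intro x hx
      obtain ⟨i, _, rfl⟩ := Finset.mem_image.mp hx
      rw [hR, Multiset.mem_toFinset, Polynomial.mem_nthRoots (by positivity)]
      rw [← pow_mul, mul_comm i (2^s), pow_mul, hωps, one_pow]
    have hinj2 : Set.InjOn (fun i => ((a : ZMod p) ^ (2^(k-s)*w)) ^ i)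
        (Finset.range (2^s)) := by
      intro i hi j hj hij
      rw [Finset.coe_range, Set.mem_Iio] at hi hj
      rw [← hordωp] at hi hj
      exact pow_injOn_Iio_orderOf (by simpa using hi) (by simpa using hj) hij
    have hcard : img.card = 2^s := by
      rw [himg, Finset.card_image_of_injOn hinj2, Finset.card_range]
    have hmemR : ((a : ZMod p) ^ (2^(k-s)*u)) ∈ R := by
      rw [hR, Multiset.mem_toFinset, Polynomial.mem_nthRoots (by positivity)]
      exact hωns
    have hnotmem : ((a : ZMod p) ^ (2^(k-s)*u)) ∉ img := by
      intro hmem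
      obtain ⟨i, _, hieq⟩ := Finset.mem_image.mp hmem
      exact hne i hieq.symm
    have h1 : 2^s + 1 ≤ R.card := by
      have h2 : (insert ((a : ZMod p) ^ (2^(k-s)*u)) img).card = 2^s + 1 := by
        rw [Finset.card_insert_of_notMem hnotmem, hcard]
      rw [← h2]
      apply Finset.card_le_card
      intro x hx
      rcases Finset.mem_insert.mp hx with h|h
      · rw [h]; exact hmemR
      · exact hsub h
    have h2 : R.card ≤ 2^s := by
      rw [hR]
      exact le_trans (Multiset.toFinset_card_le _) (Polynomial.card_nthRoots _ _)
    omega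
  obtain ⟨e0, he0⟩ := he0
  -- ω in L
  set ω : L := algebraMap K L ((a : ZMod p) ^ (2^(k-s)*w)) with hω
  have hords : orderOf ω = 2^s := by
    have h1 := orderOf_injective ((algebraMap K L) : K →* L) hinj ((a : ZMod p) ^ (2^(k-s)*w))
    rw [hω]
    exact h1.trans hordωp
  have hωs1 : ω ^ (2^s) = 1 := by rw [hω, ← map_pow, hωps, map_one]
  have hω0 : ω ≠ 0 := by
    intro h
    apply hωp0
    apply hinj
    rw [map_zero]
    exact h
  have hωmod : ∀ t : ℕ, ω ^ t = ω ^ (t % 2^s) := by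
    intro t
    conv_lhs => rw [← pow_mod_orderOf ω t]
    rw [hords]
  -- mod facts
  have h2s1 : 1 < 2^s := by
    calc 1 < 2^3 := by norm_num
      _ ≤ 2^s := Nat.pow_le_pow_right (by norm_num) hs3
  have hpmod : p % 2^s = 1 := by
    rw [hpeq, show 2^k*w = 2^s*(2^(k-s)*w) by
      rw [← mul_assoc, ← pow_add]; congr 2; omega]
    rw [Nat.add_mul_mod_self_left]
    exact Nat.mod_eq_of_lt h2s1
  have hnmod : n % 2^s = 1 := by
    rw [hueq, show 2^k*u = 2^s*(2^(k-s)*u) by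
      rw [← mul_assoc, ← pow_add]; congr 2; omega]
    rw [Nat.add_mul_mod_self_left]
    exact Nat.mod_eq_of_lt h2s1
  have hωp_pow : ω ^ p = ω := by rw [hωmod p, hpmod, pow_one]
  have hωn_pow : ω ^ n = ω := by rw [hωmod n, hnmod, pow_one]
  -- ζ^p and ζ^n
  have hζp : ζ ^ p = ω * ζ := by
    have h1 : ζ ^ p = ζ^(p-1) * ζ := by
      rw [← pow_succ]
      congr 1
      omega
    rw [h1]
    congr 1
    calc ζ^(p-1) = ζ^(2^s*(2^(k-s)*w)) := by
          congr 1
          rw [hw, ← mul_assoc, ← pow_add]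
          congr 2
          omega
      _ = aL ^ (2^(k-s)*w) := by rw [pow_mul, hζs]
      _ = ω := by rw [hω, haL, map_pow]
  have hζn : ζ ^ n = ω^e0 * ζ := by
    have h1 : ζ ^ n = ζ^(n-1) * ζ := by
      rw [← pow_succ]
      congr 1
      omega
    rw [h1]
    congr 1
    calc ζ^(n-1) = ζ^(2^s*(2^(k-s)*u)) := by
          congr 1
          rw [hu, ← mul_assoc, ← pow_add]
          congr 2
          omega
      _ = aL ^ (2^(k-s)*u) := by rw [pow_mul, hζs]
      _ = ω^e0 := by rw [hω, haL, ← map_pow, ← map_pow, he0]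
  -- the β family
  set β : ℕ → L := fun t => 1 + ω^t * ζ with hβ
  have hβmod : ∀ t t' : ℕ, t % 2^s = t' % 2^s → β t = β t' := by
    intro t t' h
    simp only [hβ]
    rw [hωmod t, hωmod t', h]
  have hβp : ∀ t, β t ^ p = β (t+1) := by
    intro t
    simp only [hβ]
    rw [add_pow_char, one_pow, mul_pow,
      show (ω^t)^p = (ω^p)^t by rw [← pow_mul, ← pow_mul, mul_comm], hωp_pow, hζp, pow_succ]
    ring
  have hβpc : ∀ t c, β t ^ (p^c) = β (t + c) := by
    intro t c
    induction c with
    | zero => simp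
    | succ c ih =>
      rw [pow_succ, pow_mul, ih, hβp]
      exact congrArg β (by omega : t + c + 1 = t + (c+1))
  -- transport the polynomial identity
  have hlift : ∀ t : ℕ, (1 + ω^t * ζ)^n = 1 + (ω^t*ζ)^n := by
    intro t
    have hcond : Polynomial.eval₂ ((algebraMap K L).comp (ZMod.castHom hpn K)) (ω^t*ζ)
        (X^(2^s) - C ((a : ZMod n))) = 0 := by
      rw [eval₂_sub, eval₂_pow, eval₂_X, eval₂_C]
      rw [mul_pow, ← pow_mul, mul_comm t (2^s), pow_mul, hωs1, one_pow, one_mul, hζs]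
      rw [RingHom.comp_apply, map_intCast, map_intCast]
      rw [haL]
      exact sub_self _
    have happ := congrArg (AdjoinRoot.lift ((algebraMap K L).comp (ZMod.castHom hpn K))
      (ω^t*ζ) hcond) hpoly
    rw [map_pow, map_add, map_one, AdjoinRoot.lift_root hcond, map_add, map_one, map_pow,
      AdjoinRoot.lift_root hcond] at happ
    exact happ
  have hβn : ∀ t, β t ^ n = β (t + (e0 + 2^s)) := by
    intro t
    have h1 : β t ^ n = β (t + e0) := by
      simp only [hβ]
      rw [hlift t, mul_pow,
        show (ω^t)^n = (ω^n)^t by rw [← pow_mul, ← pow_mul, mul_comm], hωn_pow, hζn, pow_add]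
      ring
    rw [h1]
    apply hβmod
    rw [show t + (e0+2^s) = (t+e0)+2^s by omega, Nat.add_mod_right]
  -- r and q
  obtain ⟨r, hrn⟩ := hpn
  have hrpe : r * p = n := by rw [hrn]; ring
  have hq : ∃ q : ℕ, q.Prime ∧ q ∣ n ∧ q ≠ p := by
    by_contra h
    push_neg at h
    have hall : ∀ {d : ℕ}, d.Prime → d ∣ n → d = p := fun hd hdn => h _ hd hdn
    exact hcon ⟨p, _, hp, Nat.eq_prime_pow_of_unique_prime_dvd (by omega) hall⟩
  obtain ⟨q, hqp, hqn, hqne⟩ := hq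
  have hqr : q ∣ r := by
    rcases (Nat.Prime.dvd_mul hqp).mp (show q ∣ p * r from hrn ▸ hqn) with h|h
    · exact absurd ((Nat.prime_dvd_prime_iff_eq hqp hp).mp h) hqne
    · exact h
  have hr1 : 1 < r := by
    have hrpos : 0 < r := by
      rcases Nat.eq_zero_or_pos r with h|h
      · exfalso; rw [h, mul_zero] at hrn; omega
      · exact h
    have := Nat.le_of_dvd hrpos hqr
    have := hqp.two_le
    omega
  have hE1 : 1 ≤ e0 + 2^s := by
    have := h2s1
    omega
  have hβr : ∀ t, β t ^ r = β (t + (e0 + 2^s - 1)) := by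
    intro t
    have h1 : (β t ^ r)^p = (β (t + (e0 + 2^s - 1)))^p := by
      rw [← pow_mul, hrpe, hβn, hβp]
      congr 1
      omega
    have h2 : (β t ^ r - β (t + (e0 + 2^s - 1)))^p = 0 := by
      rw [sub_pow_char, h1, sub_self]
    have h3 := pow_eq_zero_iff (hp.ne_zero) |>.mp h2
    exact sub_eq_zero.mp h3
  have hβij : ∀ i j t, β t ^ (r^i * p^j) = β (t + (i*(e0 + 2^s - 1) + j)) := by
    intro i j t
    have hri : ∀ t' i', β t' ^ (r^i') = β (t' + i'*(e0 + 2^s - 1)) := by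
      intro t' i'
      induction i' with
      | zero => simp
      | succ i' ih =>
        rw [pow_succ, pow_mul, ih, hβr]
        congr 1
        ring
    rw [pow_mul, hri, hβpc]
    congr 1
    omega
  -- β is nonvanishing
  classical
  have hβ0 : ∀ t, β t ≠ 0 := by
    intro t h0
    have hmap : (algebraMap K L) (((a : ZMod p)^(2^(k-s)*w))^t) = ω^t := by
      rw [hω, map_pow]
    have haev : Polynomial.aeval ζ (C (((a : ZMod p)^(2^(k-s)*w))^t) * X + C 1) = 0 := by
      rw [map_add, map_mul, aeval_C, aeval_C, aeval_X, hmap, map_one]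
      have h1 : β t = 0 := h0
      simp only [hβ] at h1
      linear_combination h1
    have hP := keyV _ (by
      rw [Polynomial.natDegree_linear (pow_ne_zero _ hωp0)]
      omega) haev
    have := congrArg (Polynomial.eval 0) hP
    simp at this
  -- the counting argument
  set M := Nat.sqrt (2^s) with hMdef
  have hnum := analytic n s M hn5 hn4' hs hMdef hs3
  have main : ∀ M1 M2 : ℕ, M2 < M1 → M1 ≤ n^M → 1 ≤ M2 →
      (∀ t, β t ^ M1 = β t ^ M2) → False := by
    intro M1 M2 hlt hub hlb hpow2
    have hβD : ∀ t, β t ^ (M1 - M2) = 1 := by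
      intro t
      have h2 : β t ^ M2 * β t ^ (M1 - M2) = β t ^ M2 * 1 := by
        rw [mul_one, ← pow_add, show M2 + (M1 - M2) = M1 by omega]
        exact hpow2 t
      exact mul_left_cancel₀ (pow_ne_zero _ (hβ0 t)) h2
    set T0 := (Finset.range (2^s)).powerset.erase (Finset.range (2^s)) with hT0
    set PT : Finset ℕ → K[X] :=
      fun T => ∏ i ∈ T, (C (((a : ZMod p)^(2^(k-s)*w))^i) * X + C 1) with hPT
    have hfac0 : ∀ i:ℕ, (C ((((a : ZMod p))^(2^(k-s)*w))^i) * X + C 1) ≠ (0 : K[X]) := by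
      intro i h
      have := congrArg (Polynomial.eval 0) h
      simp at this
    have haev : ∀ T : Finset ℕ, Polynomial.aeval ζ (PT T) = ∏ i ∈ T, β i := by
      intro T
      simp only [hPT]
      rw [map_prod]
      apply Finset.prod_congr rfl
      intro i _
      rw [map_add, map_mul, aeval_C, aeval_C, aeval_X,
        show (algebraMap K L) ((((a : ZMod p))^(2^(k-s)*w))^i) = ω^i by rw [hω, map_pow],
        map_one]
      simp only [hβ]
      ring
    have hdegPT : ∀ T : Finset ℕ, (PT T).natDegree = T.card := by
      intro T
      simp only [hPT]
      rw [Polynomial.natDegree_prod _ _ (fun i _ => hfac0 i)]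
      rw [Finset.sum_congr rfl (fun i _ => Polynomial.natDegree_linear (pow_ne_zero _ hωp0))]
      simp
    have key2 : ∀ A B : Finset ℕ, A ⊆ Finset.range (2^s) → B ⊆ Finset.range (2^s) →
        PT A = PT B → A ⊆ B := by
      intro A B hA hB hPAB i0 hi0
      by_contra hni0
      set z0 : K := -(((((a : ZMod p))^(2^(k-s)*w))^i0)⁻¹) with hz0
      have h1 : Polynomial.eval z0 (PT A) = 0 := by
        simp only [hPT]
        rw [Polynomial.eval_prod]
        apply Finset.prod_eq_zero hi0
        rw [Polynomial.eval_add, Polynomial.eval_mul, Polynomial.eval_C, Polynomial.eval_X,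
          Polynomial.eval_C, hz0, mul_neg, mul_inv_cancel₀ (pow_ne_zero _ hωp0)]
        ring
      have h2 : Polynomial.eval z0 (PT B) ≠ 0 := by
        simp only [hPT]
        rw [Polynomial.eval_prod, Finset.prod_ne_zero_iff]
        intro i hiB
        rw [Polynomial.eval_add, Polynomial.eval_mul, Polynomial.eval_C, Polynomial.eval_X,
          Polynomial.eval_C, hz0]
        intro hzero
        have heqc : ((((a : ZMod p))^(2^(k-s)*w))^i) = ((((a : ZMod p))^(2^(k-s)*w))^i0) := by
          have h5 : ((((a : ZMod p))^(2^(k-s)*w))^i) * (((((a : ZMod p))^(2^(k-s)*w))^i0)⁻¹) = 1 := by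
            linear_combination -hzero
          exact (mul_inv_eq_one₀ (pow_ne_zero _ hωp0)).mp h5
        have hieq : i = i0 := by
          have hi' : i ∈ Set.Iio (orderOf (((a : ZMod p))^(2^(k-s)*w))) := by
            rw [hordωp]
            exact Set.mem_Iio.mpr (Finset.mem_range.mp (hB hiB))
          have hi0' : i0 ∈ Set.Iio (orderOf (((a : ZMod p))^(2^(k-s)*w))) := by
            rw [hordωp]
            exact Set.mem_Iio.mpr (Finset.mem_range.mp (hA hi0))
          exact pow_injOn_Iio_orderOf hi' hi0' heqc
        exact hni0 (hieq ▸ hiB)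
      rw [hPAB] at h1
      exact h2 h1
    have hinjS : Set.InjOn (fun T => ∏ i ∈ T, β i) T0 := by
      intro T1 hT1 T2 hT2 heq
      have heq' : ∏ i ∈ T1, β i = ∏ i ∈ T2, β i := heq
      have hT1sub : T1 ⊆ Finset.range (2^s) := Finset.mem_powerset.mp (Finset.mem_of_mem_erase hT1)
      have hT2sub : T2 ⊆ Finset.range (2^s) := Finset.mem_powerset.mp (Finset.mem_of_mem_erase hT2)
      have hT1ne : T1 ≠ Finset.range (2^s) := Finset.ne_of_mem_erase hT1
      have hT2ne : T2 ≠ Finset.range (2^s) := Finset.ne_of_mem_erase hT2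
      have hc1 : T1.card < 2^s := by
        have := Finset.card_lt_card (Finset.ssubset_iff_subset_ne.mpr ⟨hT1sub, hT1ne⟩)
        rwa [Finset.card_range] at this
      have hc2 : T2.card < 2^s := by
        have := Finset.card_lt_card (Finset.ssubset_iff_subset_ne.mpr ⟨hT2sub, hT2ne⟩)
        rwa [Finset.card_range] at this
      have hPeq : PT T1 = PT T2 := by
        have hdeg : (PT T1 - PT T2).natDegree < 2^s := by
          apply lt_of_le_of_lt (Polynomial.natDegree_sub_le _ _)
          rw [hdegPT, hdegPT]
          exact max_lt hc1 hc2
        have h0 : Polynomial.aeval ζ (PT T1 - PT T2) = 0 := by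
          rw [map_sub, haev, haev, heq', sub_self]
        exact sub_eq_zero.mp (keyV _ hdeg h0)
      exact Finset.Subset.antisymm (key2 _ _ hT1sub hT2sub hPeq) (key2 _ _ hT2sub hT1sub hPeq.symm)
    have hcardT0 : T0.card = 2^(2^s) - 1 := by
      rw [hT0, Finset.card_erase_of_mem (Finset.mem_powerset_self _), Finset.card_powerset,
        Finset.card_range]
    set Sprod := T0.image (fun T => ∏ i ∈ T, β i) with hS
    have hcardS : Sprod.card = 2^(2^s) - 1 := by
      rw [hS, Finset.card_image_of_injOn hinjS, hcardT0]
    have hroots : Sprod ⊆ (Polynomial.nthRoots (M1 - M2) (1:L)).toFinset := by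
      intro x hx
      obtain ⟨T, _, rfl⟩ := Finset.mem_image.mp hx
      rw [Multiset.mem_toFinset, Polynomial.mem_nthRoots (by omega)]
      rw [← Finset.prod_pow]
      exact Finset.prod_eq_one (fun i _ => hβD i)
    have hDbig : 2^(2^s) - 1 ≤ M1 - M2 := by
      calc 2^(2^s) - 1 = Sprod.card := hcardS.symm
        _ ≤ (Polynomial.nthRoots (M1 - M2) (1:L)).toFinset.card := Finset.card_le_card hroots
        _ ≤ Multiset.card (Polynomial.nthRoots (M1 - M2) (1:L)) := Multiset.toFinset_card_le _
        _ ≤ M1 - M2 := Polynomial.card_nthRoots _ _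
    omega
  -- pigeonhole
  have hppos : 0 < p := by omega
  have hrpos : 0 < r := by omega
  have hcard2 : (Finset.range (2^s)).card <
      ((Finset.range (M+1)) ×ˢ (Finset.range (M+1))).card := by
    rw [Finset.card_product, Finset.card_range, Finset.card_range]
    have h := Nat.lt_succ_sqrt' (2^s)
    rw [pow_two] at h
    exact h
  obtain ⟨x, hx, y, hy, hxy, hfxy⟩ := Finset.exists_ne_map_eq_of_card_lt_of_maps_to
    (f := fun z : ℕ×ℕ => (z.1*(e0+2^s-1) + z.2) % 2^s) hcard2
    (fun z _ => Finset.mem_range.mpr (Nat.mod_lt _ (by positivity)))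
  have hx1 : x.1 ≤ M := by
    have := Finset.mem_range.mp (Finset.mem_product.mp hx).1
    omega
  have hx2 : x.2 ≤ M := by
    have := Finset.mem_range.mp (Finset.mem_product.mp hx).2
    omega
  have hy1 : y.1 ≤ M := by
    have := Finset.mem_range.mp (Finset.mem_product.mp hy).1
    omega
  have hy2 : y.2 ≤ M := by
    have := Finset.mem_range.mp (Finset.mem_product.mp hy).2
    omega
  have hmEq : ∀ t, β t ^ (r^x.1 * p^x.2) = β t ^ (r^y.1 * p^y.2) := by
    intro t
    rw [hβij, hβij]
    exact hβmod _ _ (Nat.ModEq.add_left t hfxy)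
  have hm12 : r^x.1 * p^x.2 ≠ r^y.1 * p^y.2 := by
    intro he
    rcases Nat.lt_trichotomy x.1 y.1 with h|h|h
    · have hc : r^(y.1-x.1) * p^(y.2) = p^(x.2) := by
        have h0 : r^(x.1) * (r^(y.1-x.1) * p^(y.2)) = r^(x.1) * p^(x.2) := by
          rw [← mul_assoc, ← pow_add, show x.1 + (y.1-x.1) = y.1 by omega]
          exact he.symm
        exact Nat.eq_of_mul_eq_mul_left (pow_pos hrpos _) h0
      have hqd : q ∣ p^(x.2) := by
        rw [← hc]
        exact Dvd.dvd.mul_right (dvd_pow hqr (by omega)) _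
      exact hqne ((Nat.prime_dvd_prime_iff_eq hqp hp).mp (hqp.dvd_of_dvd_pow hqd))
    · have hc : p^(x.2) = p^(y.2) := by
        rw [h] at he
        exact Nat.eq_of_mul_eq_mul_left (pow_pos hrpos _) he
      exact hxy (Prod.ext h (Nat.pow_right_injective hp.two_le hc))
    · have hc : r^(x.1-y.1) * p^(x.2) = p^(y.2) := by
        have h0 : r^(y.1) * (r^(x.1-y.1) * p^(x.2)) = r^(y.1) * p^(y.2) := by
          rw [← mul_assoc, ← pow_add, show y.1 + (x.1-y.1) = x.1 by omega]
          exact he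
        exact Nat.eq_of_mul_eq_mul_left (pow_pos hrpos _) h0
      have hqd : q ∣ p^(y.2) := by
        rw [← hc]
        exact Dvd.dvd.mul_right (dvd_pow hqr (by omega)) _
      exact hqne ((Nat.prime_dvd_prime_iff_eq hqp hp).mp (hqp.dvd_of_dvd_pow hqd))
  -- bound on r^i p^j
  have hble : r ≤ n := Nat.le_of_dvd (by omega) ⟨p, by rw [hrn]; ring⟩
  have hple : p ≤ n := Nat.le_of_dvd (by omega) ⟨r, hrn⟩
  have hbound : ∀ i j : ℕ, i ≤ M → j ≤ M → r^i * p^j ≤ n^M := by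
    intro i j hi hj
    rcases le_total i j with h|h
    · calc r^i*p^j = (r*p)^i * p^(j-i) := by
            rw [mul_pow, mul_assoc, ← pow_add, show i + (j-i) = j by omega]
        _ = n^i * p^(j-i) := by rw [hrpe]
        _ ≤ n^i * n^(j-i) := Nat.mul_le_mul_left _ (Nat.pow_le_pow_left hple _)
        _ = n^j := by rw [← pow_add, show i + (j-i) = j by omega]
        _ ≤ n^M := Nat.pow_le_pow_right (by omega) hj
    · calc r^i*p^j = (r*p)^j * r^(i-j) := by
            rw [mul_pow, mul_comm ((r:ℕ)^j) (p^j), mul_comm, mul_assoc, ← pow_add,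
              show j + (i-j) = i by omega]
        _ = n^j * r^(i-j) := by rw [hrpe]
        _ ≤ n^j * n^(i-j) := Nat.mul_le_mul_left _ (Nat.pow_le_pow_left hble _)
        _ = n^i := by rw [← pow_add, show j + (i-j) = i by omega]
        _ ≤ n^M := Nat.pow_le_pow_right (by omega) hi
  have hpos2 : ∀ i j : ℕ, 1 ≤ r^i * p^j := fun i j =>
    Nat.one_le_iff_ne_zero.mpr (Nat.mul_ne_zero (pow_ne_zero _ (by omega)) (pow_ne_zero _ (by omega)))
  rcases Nat.lt_or_ge (r^y.1 * p^y.2) (r^x.1 * p^x.2) with h|h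
  · exact main _ _ h (hbound x.1 x.2 hx1 hx2) (hpos2 y.1 y.2) hmEq
  · have h' : r^x.1 * p^x.2 < r^y.1 * p^y.2 := lt_of_le_of_ne h hm12
    exact main _ _ h' (hbound y.1 y.2 hy1 hy2) (hpos2 x.1 x.2) (fun t => (hmEq t).symm)
end
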